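/- arXiv:1611.10110 — 8 statements merged into one kernel-verified Lean document; each statement's English description precedes it below -/
import Mathlib

section
/- Let h, d, s be natural numbers with d ≤ h and 1 ≤ s ≤ h. Then the number of integers k with 0 ≤ k ≤ s−1 such that ∑_{j=0}^{k} C(d, s−j)·C(h−d, j) = C(h, s) is equal to max(s + d − h, 0). -/
lemma vandermonde_range (h d s : ℕ) (hdh : d ≤ h) :
    ∑ j ∈ Finset.range (s + 1), Nat.choose d (s - j) * Nat.choose (h - d) j
      = Nat.choose h s := by
  have := Nat.add_choose_eq (h - d) d s
  rw [Nat.sub_add_cancel hdh] at this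
  rw [this, Finset.Nat.sum_antidiagonal_eq_sum_range_succ_mk]
  exact Finset.sum_congr rfl fun j _ => by ring

/-- Let `h, d, s` be natural numbers with `d ≤ h` and `1 ≤ s ≤ h`.
The number of integers `k` with `0 ≤ k ≤ s - 1` such that
`∑_{j=0}^{k} C(d, s-j)·C(h-d, j) = C(h, s)` equals `max (s + d - h) 0`
(which, with truncated subtraction on `ℕ`, is `s + d - h`). -/
theorem card_filter_sum_choose_eq_choose
    (h d s : ℕ) (hdh : d ≤ h) (hs1 : 1 ≤ s) (hsh : s ≤ h) :
    ((Finset.range s).filter fun k =>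
        ∑ j ∈ Finset.range (k + 1), Nat.choose d (s - j) * Nat.choose (h - d) j
          = Nat.choose h s).card = s + d - h := by
  have hv := vandermonde_range h d s hdh
  set m := min s (h - d) with hm
  have hsplit : ∀ k, k < s →
      (∑ j ∈ Finset.range (k + 1), Nat.choose d (s - j) * Nat.choose (h - d) j)
        + ∑ j ∈ Finset.Ico (k + 1) (s + 1), Nat.choose d (s - j) * Nat.choose (h - d) j
      = Nat.choose h s := by
    intro k hk
    rw [← hv, Finset.range_eq_Ico, Finset.range_eq_Ico]
    exact Finset.sum_Ico_consecutive (fun j => Nat.choose d (s - j) * Nat.choose (h - d) j) (m := 0) (n := k + 1) (k := s + 1) (Nat.zero_le _) (by omega)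
  have hfil : (Finset.range s).filter (fun k =>
        ∑ j ∈ Finset.range (k + 1), Nat.choose d (s - j) * Nat.choose (h - d) j
          = Nat.choose h s) = Finset.Ico m s := by
    ext k
    simp only [Finset.mem_filter, Finset.mem_range, Finset.mem_Ico]
    constructor
    · rintro ⟨hk, heq⟩
      refine ⟨?_, hk⟩
      by_contra hlt
      push_neg at hlt
      have := hsplit k hk
      rw [heq] at this
      have htail : (0:ℕ) <
          ∑ j ∈ Finset.Ico (k + 1) (s + 1), Nat.choose d (s - j) * Nat.choose (h - d) j := by
        refine Finset.sum_pos' (fun i _ => Nat.zero_le _) ⟨m, ?_, ?_⟩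
        · rw [Finset.mem_Ico]; omega
        · have h1 : 0 < Nat.choose d (s - m) := Nat.choose_pos (by omega)
          have h2 : 0 < Nat.choose (h - d) m := Nat.choose_pos (by omega)
          positivity
      omega
    · rintro ⟨hmk, hk⟩
      refine ⟨hk, ?_⟩
      have htail : ∑ j ∈ Finset.Ico (k + 1) (s + 1),
          Nat.choose d (s - j) * Nat.choose (h - d) j = 0 := by
        refine Finset.sum_eq_zero fun j hj => ?_
        rw [Finset.mem_Ico] at hj
        have : h - d < j := by omega
        rw [Nat.choose_eq_zero_of_lt this, mul_zero]
      have := hsplit k hk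
      omega
  rw [hfil, Nat.card_Ico]
  omega
end

section
/- Let R be a discrete valuation ring with uniformizer π, let M be a free R-module of finite rank, and let Fil⁰ ⊆ Fil¹ ⊆ ⋯ ⊆ Fil^r = M be a chain of submodules with π·Fil^i ⊆ Fil^{i−1} for 1 ≤ i ≤ r. Fix s ≥ 1, and for 0 ≤ i ≤ r−1, 0 ≤ j < s define Fil^{[is+j]}(⋀^s M) ⊆ ⋀^s M as the image of the canonical map ⋀^{s−j} Fil^i ⊗_R ⋀^{j} Fil^{i+1} → ⋀^s M induced by the inclusions into M and the wedge product, and set Fil^{[rs]}(⋀^s M) = ⋀^s M. Then Fil^{[l−1]}(⋀^s M) ⊆ Fil^{[l]}(⋀^s M) and π·Fil^{[l]}(⋀^s M) ⊆ Fil^{[l−1]}(⋀^s M) for all 1 ≤ l ≤ rs. -/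
open Pointwise

private lemma smul_mul_left' {R A : Type*} [CommSemiring R] [Semiring A] [Algebra R A]
    (a : R) (P Q : Submodule R A) : a • (P * Q) = P * (a • Q) := by
  simpa using Submodule.mul_smul_mul_eq_smul_mul_smul P Q 1 a

private lemma smul_mul_right' {R A : Type*} [CommSemiring R] [Semiring A] [Algebra R A]
    (a : R) (P Q : Submodule R A) : a • (P * Q) = (a • P) * Q := by
  simpa using Submodule.mul_smul_mul_eq_smul_mul_smul P Q a 1

private lemma divmod_eq (s q t n : ℕ) (h : n = s * q + t) (ht : t < s) :
    n / s = q ∧ n % s = t := by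
  subst h
  have hs : 0 < s := by omega
  refine ⟨?_, ?_⟩
  · rw [Nat.mul_add_div hs, Nat.div_eq_of_lt ht]; omega
  · rw [Nat.mul_add_mod, Nat.mod_eq_of_lt ht]

/-- Let `R` be a DVR with uniformizer `π`, `M` a free `R`-module of finite
rank, and `Fil⁰ ⊆ Fil¹ ⊆ ⋯ ⊆ Fil^r = M` a chain of submodules with `π·Fil^i ⊆ Fil^{i-1}`
(we extend the chain by `Fil^i = M` for `i ≥ r`).  Fix `s ≥ 1` and for `l = i·s + j`
(`0 ≤ i ≤ r-1`, `0 ≤ j < s`, i.e. `i = l / s`, `j = l % s`) let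
`Fil^{[l]}(⋀^s M) := image of ⋀^{s-j} Fil^i ⊗ ⋀^{j} Fil^{i+1} → ⋀^s M`, realized as the
submodule product `(ι Fil^i)^{s-j} * (ι Fil^{i+1})^{j}` in the exterior algebra; for
`l = r·s` this formula gives `Fil^{[rs]}(⋀^s M) = ⋀^s M`.  Then for `1 ≤ l ≤ r·s` one has
`Fil^{[l-1]} ⊆ Fil^{[l]}` and `π·Fil^{[l]} ⊆ Fil^{[l-1]}`. -/
theorem filtration_exteriorPower_chain
    {R : Type*} [CommRing R] [IsDomain R] [IsDiscreteValuationRing R]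
    (π : R) (hπ : Irreducible π)
    {M : Type*} [AddCommGroup M] [Module R M] [Module.Free R M] [Module.Finite R M]
    (r : ℕ) (hr : 1 ≤ r) (Fil : ℕ → Submodule R M)
    (hmono : ∀ i, i < r → Fil i ≤ Fil (i + 1))
    (htop : ∀ i, r ≤ i → Fil i = ⊤)
    (hsm : ∀ i, 1 ≤ i → i ≤ r → π • Fil i ≤ Fil (i - 1))
    (s : ℕ) (hs : 1 ≤ s)
    (FilW : ℕ → Submodule R (ExteriorAlgebra R M))
    (hFilW : ∀ l, FilW l =
      (Submodule.map (ExteriorAlgebra.ι R) (Fil (l / s))) ^ (s - l % s) *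
        (Submodule.map (ExteriorAlgebra.ι R) (Fil (l / s + 1))) ^ (l % s))
    (l : ℕ) (hl1 : 1 ≤ l) (hl2 : l ≤ r * s) :
    FilW (l - 1) ≤ FilW l ∧ π • FilW l ≤ FilW (l - 1) := by
  have hAmono : ∀ i, i < r →
      Submodule.map (ExteriorAlgebra.ι R) (Fil i) ≤
        Submodule.map (ExteriorAlgebra.ι R) (Fil (i + 1)) := fun i hi =>
    Submodule.map_mono (hmono i hi)
  have hAsm : ∀ i, 1 ≤ i → i ≤ r →
      π • Submodule.map (ExteriorAlgebra.ι R) (Fil i) ≤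
        Submodule.map (ExteriorAlgebra.ι R) (Fil (i - 1)) := by
    intro i h1 h2
    rw [← Submodule.map_pointwise_smul]
    exact Submodule.map_mono (hsm i h1 h2)
  rw [hFilW l, hFilW (l - 1)]
  set A : ℕ → Submodule R (ExteriorAlgebra R M) :=
    fun i => Submodule.map (ExteriorAlgebra.ι R) (Fil i) with hA
  obtain ⟨i, hi⟩ : ∃ i, l / s = i := ⟨_, rfl⟩
  obtain ⟨j, hj⟩ : ∃ j, l % s = j := ⟨_, rfl⟩
  have hij : l = s * i + j := by
    have h := Nat.div_add_mod l s
    rw [hi, hj] at h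
    omega
  have hjs : j < s := by rw [← hj]; exact Nat.mod_lt _ (by omega)
  have hc : r * s = s * r := Nat.mul_comm r s
  rw [hi, hj]
  rcases Nat.eq_zero_or_pos j with hj0 | hj0
  · -- j = 0 : l = s * i, i ≥ 1
    have hi1 : 1 ≤ i := by
      rcases Nat.eq_zero_or_pos i with h | h
      · rw [h] at hij; simp at hij; omega
      · exact h
    obtain ⟨i', rfl⟩ : ∃ i', i = i' + 1 := ⟨i - 1, by omega⟩
    have hir : i' + 1 ≤ r := by
      by_contra h
      have hm : s * r + s ≤ s * (i' + 1) := by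
        calc s * r + s = s * (r + 1) := by ring
          _ ≤ s * (i' + 1) := Nat.mul_le_mul_left s (by omega)
      omega
    have hsplit : s * i' + s = s * (i' + 1) := by ring
    obtain ⟨e1, e2⟩ := divmod_eq s i' (s - 1) (l - 1) (by omega) (by omega)
    rw [e1, e2, hj0, show s - (s - 1) = 1 from by omega, pow_zero, mul_one, pow_one]
    constructor
    · calc A i' * A (i' + 1) ^ (s - 1)
          ≤ A (i' + 1) * A (i' + 1) ^ (s - 1) :=
            mul_le_mul' (hAmono i' (by omega)) le_rfl
        _ = A (i' + 1) ^ (s - 0) := by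
            rw [← pow_succ']
            congr 1
            omega
    · calc π • A (i' + 1) ^ (s - 0) = π • (A (i' + 1) * A (i' + 1) ^ (s - 1)) := by
            rw [← pow_succ']
            congr 2
            omega
        _ = (π • A (i' + 1)) * A (i' + 1) ^ (s - 1) := smul_mul_right' _ _ _
        _ ≤ A i' * A (i' + 1) ^ (s - 1) := by
            refine mul_le_mul' ?_ le_rfl
            have := hAsm (i' + 1) (by omega) hir
            simpa using this
  · -- j ≥ 1
    have hir : i < r := by
      by_contra h
      have hm : s * r ≤ s * i := Nat.mul_le_mul_left s (by omega)
      omega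
    obtain ⟨e1, e2⟩ := divmod_eq s i (j - 1) (l - 1) (by omega) (by omega)
    rw [e1, e2, show s - (j - 1) = (s - j) + 1 from by omega]
    constructor
    · calc A i ^ (s - j + 1) * A (i + 1) ^ (j - 1)
          = A i ^ (s - j) * (A i * A (i + 1) ^ (j - 1)) := by
            rw [pow_succ, mul_assoc]
        _ ≤ A i ^ (s - j) * (A (i + 1) * A (i + 1) ^ (j - 1)) :=
            mul_le_mul' le_rfl (mul_le_mul' (hAmono i hir) le_rfl)
        _ = A i ^ (s - j) * A (i + 1) ^ j := by
            rw [← pow_succ']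
            congr 2
            omega
    · calc π • (A i ^ (s - j) * A (i + 1) ^ j)
          = A i ^ (s - j) * (π • (A (i + 1) * A (i + 1) ^ (j - 1))) := by
            rw [smul_mul_left']
            congr 2
            rw [← pow_succ']
            congr 1
            omega
        _ = A i ^ (s - j) * ((π • A (i + 1)) * A (i + 1) ^ (j - 1)) := by
            rw [smul_mul_right']
        _ ≤ A i ^ (s - j) * (A i * A (i + 1) ^ (j - 1)) := by
            refine mul_le_mul' le_rfl (mul_le_mul' ?_ le_rfl)
            have := hAsm (i + 1) (by omega) (by omega)
            simpa using this
        _ = A i ^ (s - j + 1) * A (i + 1) ^ (j - 1) := by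
            rw [pow_succ, mul_assoc]
end

section
/- Let R be a discrete valuation ring with uniformizer π, let M be a free R-module of finite rank, and let N ⊆ M be a submodule with π·M ⊆ N such that the R-module M/N has length f. Then for every natural number d and every x ∈ ⋀^d M, the element π^{min(d,f)}·x lies in the image of the canonical map ⋀^d N → ⋀^d M. -/
open Pointwise

/-- An `R`-module `P` has length `n` iff it admits a composition series from `⊥` to `⊤`
of length `n`. -/
def ModuleLengthEq (R : Type*) [Ring R] (P : Type*) [AddCommGroup P] [Module R P]
    (n : ℕ) : Prop :=
  ∃ s : CompositionSeries (Submodule R P), s.head = ⊥ ∧ s.last = ⊤ ∧ s.length = n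

section Aux

variable {R : Type*} [Ring R]

/-- A module with a composition series of length `n` from `⊥` to `⊤` is generated by
`n` elements. -/
lemma ModuleLengthEq.exists_fin_span_eq_top {P : Type*} [AddCommGroup P] [Module R P]
    {n : ℕ} (h : ModuleLengthEq R P n) :
    ∃ v : Fin n → P, Submodule.span R (Set.range v) = ⊤ := by
  obtain ⟨s, hh, hl, hn⟩ := h
  subst hn
  suffices H : ∀ i : ℕ, ∀ hi : i < s.length + 1,
      ∃ v : Fin i → P, Submodule.span R (Set.range v) = s ⟨i, hi⟩ by
    obtain ⟨v, hv⟩ := H s.length (Nat.lt_succ_self _)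
    exact ⟨v, hv.trans hl⟩
  intro i
  induction i with
  | zero =>
    intro hi
    refine ⟨Fin.elim0, ?_⟩
    rw [Set.range_eq_empty, Submodule.span_empty]
    have : s ⟨0, hi⟩ = s.head := rfl
    rw [this, hh]
  | succ i ih =>
    intro hi
    obtain ⟨v, hv⟩ := ih (by omega)
    have hstep : s ⟨i, by omega⟩ ⋖ s ⟨i + 1, hi⟩ := s.step ⟨i, by omega⟩
    obtain ⟨x, hxmem, hxnot⟩ := SetLike.exists_of_lt hstep.lt
    refine ⟨Fin.cons x v, ?_⟩
    rw [Fin.range_cons, Submodule.span_insert, hv]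
    have hle : (R ∙ x) ⊔ s ⟨i, by omega⟩ ≤ s ⟨i + 1, hi⟩ :=
      sup_le ((Submodule.span_singleton_le_iff_mem _ _).2 hxmem) hstep.lt.le
    have hlt : s ⟨i, by omega⟩ < (R ∙ x) ⊔ s ⟨i, by omega⟩ := by
      refine lt_of_le_of_ne le_sup_right fun he => hxnot ?_
      rw [he]
      exact Submodule.mem_sup_left (Submodule.mem_span_singleton_self x)
    rcases hle.lt_or_eq with hc | hc
    · exact absurd hc (hstep.2 hlt)
    · exact hc

/-- A finite sum of submodules is bounded by `C` if each summand is. -/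
lemma finset_sum_le_of_le {E ι : Type*} [Semiring R] [AddCommMonoid E] [Module R E]
    (s : Finset ι) (T : ι → Submodule R E) (C : Submodule R E)
    (h : ∀ j ∈ s, T j ≤ C) : ∑ j ∈ s, T j ≤ C := by
  classical
  induction s using Finset.induction_on with
  | empty => simpa using bot_le
  | @insert a s hns ih =>
    rw [Finset.sum_insert hns, Submodule.add_eq_sup]
    exact sup_le (h _ (Finset.mem_insert_self _ _))
      (ih fun j hj => h j (Finset.mem_insert_of_mem hj))

/-- Each summand is below the finite sum of submodules. -/
lemma le_finset_sum {E ι : Type*} [Semiring R] [AddCommMonoid E] [Module R E]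
    {s : Finset ι} (T : ι → Submodule R E) {j : ι} (hj : j ∈ s) :
    T j ≤ ∑ i ∈ s, T i := by
  classical
  rw [← Finset.add_sum_erase _ _ hj, Submodule.add_eq_sup]
  exact le_sup_left

end Aux

/-- Let `R` be a DVR with uniformizer `π`, `M` a free `R`-module of finite
rank, and `N ⊆ M` a submodule with `π·M ⊆ N` such that `M/N` has length `f`.  Then for every
`d` and every `x ∈ ⋀^d M`, the element `π^{min(d,f)}·x` lies in the image of the canonical
map `⋀^d N → ⋀^d M` (which, inside the exterior algebra, is the submodule `(ι N)^d`). -/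
theorem pow_uniformizer_smul_mem_exteriorPower_image
    {R : Type*} [CommRing R] [IsDomain R] [IsDiscreteValuationRing R]
    (π : R) (hπ : Irreducible π)
    {M : Type*} [AddCommGroup M] [Module R M] [Module.Free R M] [Module.Finite R M]
    (N : Submodule R M) (hπM : ∀ x : M, π • x ∈ N)
    (f : ℕ) (hlen : ModuleLengthEq R (M ⧸ N) f)
    (d : ℕ) (x : ExteriorAlgebra R M) (hx : x ∈ ⋀[R]^d M) :
    π ^ min d f • x ∈ (Submodule.map (ExteriorAlgebra.ι R) N) ^ d := by
  classical
  -- Step 1: lift generators of `M ⧸ N` to `M`.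
  obtain ⟨v, hv⟩ := hlen.exists_fin_span_eq_top
  choose w hw using fun i => Submodule.mkQ_surjective N (v i)
  have hNw : N ⊔ Submodule.span R (Set.range w) = ⊤ := by
    have h1 : Submodule.map N.mkQ (Submodule.span R (Set.range w)) = ⊤ := by
      rw [Submodule.map_span, ← Set.range_comp]
      have : (N.mkQ ∘ w) = v := funext hw
      rw [this, hv]
    have h2 := congrArg (Submodule.comap N.mkQ) h1
    rwa [Submodule.comap_map_eq, Submodule.ker_mkQ, Submodule.comap_top, sup_comm] at h2
  -- Step 2: set up the submodules `A` and `B` of the exterior algebra.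
  set A : Submodule R (ExteriorAlgebra R M) := Submodule.map (ExteriorAlgebra.ι R) N with hAdef
  set B : Submodule R (ExteriorAlgebra R M) :=
    Submodule.span R (Set.range fun i => ExteriorAlgebra.ι R (w i)) with hBdef
  have hAspan : A = Submodule.span R (ExteriorAlgebra.ι R '' (N : Set M)) := by
    conv_lhs => rw [hAdef, ← Submodule.span_eq N]
    rw [Submodule.map_span]
  have hπS : ∀ m : M, π • ExteriorAlgebra.ι R m ∈ A := fun m => by
    rw [← map_smul]
    exact ⟨π • m, hπM m, rfl⟩
  have hBA : ∀ b ∈ B, π • b ∈ A := by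
    intro b hb
    have hle : B ≤ Submodule.comap (LinearMap.lsmul R (ExteriorAlgebra R M) π) A := by
      rw [hBdef]
      refine Submodule.span_le.2 ?_
      rintro _ ⟨i, rfl⟩
      simpa using hπS (w i)
    simpa using hle hb
  have hanti : ∀ a b : M, ExteriorAlgebra.ι R a * ExteriorAlgebra.ι R b
      = -(ExteriorAlgebra.ι R b * ExteriorAlgebra.ι R a) := fun a b =>
    eq_neg_of_add_eq_zero_left (ExteriorAlgebra.ι_add_mul_swap a b)
  -- Step 3: commutation of `B` past powers of `A`.
  have hBAle : B * A ≤ A * B := by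
    rw [hAspan, hBdef, Submodule.span_mul_span, Submodule.span_mul_span]
    refine Submodule.span_le.2 ?_
    rintro _ ⟨_, ⟨i, rfl⟩, _, ⟨m, hm, rfl⟩, rfl⟩
    show ExteriorAlgebra.ι R (w i) * ExteriorAlgebra.ι R m ∈ _
    rw [hanti]
    exact neg_mem (Submodule.subset_span ⟨_, ⟨m, hm, rfl⟩, _, ⟨i, rfl⟩, rfl⟩)
  have hBApow : ∀ e : ℕ, B * A ^ e ≤ A ^ e * B := by
    intro e
    induction e with
    | zero => simp
    | succ e ih =>
      calc B * A ^ (e + 1) = (B * A ^ e) * A := by rw [pow_succ, mul_assoc]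
        _ ≤ (A ^ e * B) * A := mul_le_mul' ih le_rfl
        _ = A ^ e * (B * A) := by rw [mul_assoc]
        _ ≤ A ^ e * (A * B) := mul_le_mul' le_rfl hBAle
        _ = A ^ (e + 1) * B := by rw [← mul_assoc, ← pow_succ]
  -- Step 4: the binomial-type decomposition.
  have hsum : ∀ e : ℕ, (A ⊔ B) ^ e ≤ ∑ j ∈ Finset.range (e + 1), A ^ (e - j) * B ^ j := by
    intro e
    induction e with
    | zero => simp
    | succ e ih =>
      rw [pow_succ']
      calc (A ⊔ B) * (A ⊔ B) ^ e
          ≤ (A ⊔ B) * ∑ j ∈ Finset.range (e + 1), A ^ (e - j) * B ^ j :=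
            mul_le_mul' le_rfl ih
        _ = ∑ j ∈ Finset.range (e + 1), (A ⊔ B) * (A ^ (e - j) * B ^ j) := Finset.mul_sum _ _ _
        _ ≤ ∑ j ∈ Finset.range (e + 2), A ^ (e + 1 - j) * B ^ j := by
            refine finset_sum_le_of_le _ _ _ ?_
            intro j hj
            rw [Finset.mem_range, Nat.lt_succ_iff] at hj
            rw [Submodule.sup_mul]
            refine sup_le ?_ ?_
            · have h1 : A * (A ^ (e - j) * B ^ j) = A ^ (e + 1 - j) * B ^ j := by
                rw [← mul_assoc, ← pow_succ']
                congr 2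
                omega
              rw [h1]
              exact le_finset_sum (fun j => A ^ (e + 1 - j) * B ^ j) (j := j)
                (Finset.mem_range.2 (by omega))
            · calc B * (A ^ (e - j) * B ^ j) = (B * A ^ (e - j)) * B ^ j := by rw [mul_assoc]
                _ ≤ (A ^ (e - j) * B) * B ^ j := mul_le_mul' (hBApow _) le_rfl
                _ = A ^ (e + 1 - (j + 1)) * B ^ (j + 1) := by
                    have h2 : e - j = e + 1 - (j + 1) := by omega
                    rw [mul_assoc, ← pow_succ', h2]
                _ ≤ _ := le_finset_sum (fun j => A ^ (e + 1 - j) * B ^ j) (j := j + 1)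
                    (Finset.mem_range.2 (by omega))
  -- Step 5: high powers of `B` vanish.
  have hBbot : B ^ (f + 1) = ⊥ := by
    rw [hBdef, Submodule.span_pow, Submodule.span_eq_bot]
    intro y hy
    rw [Set.mem_pow] at hy
    obtain ⟨g, hg⟩ := hy
    choose k hk using fun i => (g i).2
    obtain ⟨i, j, hij, hkij⟩ :=
      Fintype.exists_ne_map_eq_of_card_lt k (by simp)
    have hy' : y = ExteriorAlgebra.ιMulti R (f + 1) (fun i => w (k i)) := by
      rw [ExteriorAlgebra.ιMulti_apply, ← hg]
      have hfun : (fun i => ExteriorAlgebra.ι R (w (k i)))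
          = fun i => ((g i : ExteriorAlgebra R M)) := funext hk
      rw [hfun]
    rw [hy']
    exact AlternatingMap.map_eq_zero_of_eq _ _ (by rw [hkij]) hij
  have hBj : ∀ j : ℕ, f < j → B ^ j = ⊥ := by
    intro j hj
    have h1 : B ^ j = B ^ (f + 1) * B ^ (j - (f + 1)) := by
      rw [← pow_add]
      congr 1
      omega
    rw [h1, hBbot, Submodule.bot_mul]
  -- Step 6: `π^j` carries `B^j` into `A^j`.
  have hsmul : ∀ j : ℕ, ∀ b ∈ B ^ j, π ^ j • b ∈ A ^ j := by
    intro j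
    induction j with
    | zero => intro b hb; simpa using hb
    | succ j ih =>
      intro b hb
      rw [pow_succ'] at hb
      refine Submodule.mul_induction_on hb ?_ ?_
      · intro m hm n hn
        have heq : π ^ (j + 1) • (m * n) = (π • m) * (π ^ j • n) := by
          rw [mul_smul_comm, smul_mul_assoc, smul_smul, ← pow_succ]
        rw [heq, pow_succ']
        exact Submodule.mul_mem_mul (hBA m hm) (ih n hn)
      · intro u u' hu hu'
        rw [smul_add]
        exact add_mem hu hu'
  -- Step 7: assemble.
  have hAB : A ⊔ B = LinearMap.range (ExteriorAlgebra.ι R : M →ₗ[R] ExteriorAlgebra R M) := by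
    have hBmap : B = Submodule.map (ExteriorAlgebra.ι R) (Submodule.span R (Set.range w)) := by
      rw [hBdef, Submodule.map_span, ← Set.range_comp]
      rfl
    rw [hAdef, hBmap, ← Submodule.map_sup, hNw, Submodule.map_top]
  have hx2 : x ∈ (A ⊔ B) ^ d := by rw [hAB]; exact hx
  have hx3 := hsum d hx2
  have key : ∑ j ∈ Finset.range (d + 1), A ^ (d - j) * B ^ j
      ≤ Submodule.comap (LinearMap.lsmul R (ExteriorAlgebra R M) (π ^ min d f)) (A ^ d) := by
    refine finset_sum_le_of_le _ _ _ ?_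
    intro j hj
    rw [Finset.mem_range, Nat.lt_succ_iff] at hj
    by_cases hjf : j ≤ f
    · intro y hy
      refine Submodule.mul_induction_on hy ?_ ?_
      · intro a ha b hb
        have h1 : π ^ j • b ∈ A ^ j := hsmul j b hb
        have h2 : a * (π ^ j • b) ∈ A ^ d := by
          have h3 := Submodule.mul_mem_mul ha h1
          rwa [← pow_add, Nat.sub_add_cancel hj] at h3
        simp only [Submodule.mem_comap, LinearMap.lsmul_apply]
        have heq : π ^ min d f • (a * b) = π ^ (min d f - j) • (a * (π ^ j • b)) := by
          rw [mul_smul_comm, smul_smul, ← pow_add,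
            Nat.sub_add_cancel (le_min hj hjf)]
        rw [heq]
        exact Submodule.smul_mem _ _ h2
      · intro u u' hu hu'
        simp only [Submodule.mem_comap, LinearMap.lsmul_apply, smul_add] at *
        exact add_mem hu hu'
    · rw [hBj j (by omega), Submodule.mul_bot]
      exact bot_le
  simpa using key hx3
end

section
/- Let R be a commutative ring, let n ≥ 1 and r ≥ 1 be integers, let M be a free R-module of rank n + r, and let N ⊆ M be a direct summand which is free of rank n and such that M/N is free of rank r. Then for every integer d with 1 ≤ d ≤ n, the canonical R-linear map ⋀^d N ⊗_R ⋀^r M → ⋀^{d+r} M, induced by the inclusion N ⊆ M and the wedge product, is surjective. -/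
open TensorProduct

open ExteriorAlgebra Submodule


section Aux
variable {R : Type*} [CommRing R] {M : Type*} [AddCommGroup M] [Module R M]

/-- Products of `ι`-images of submodules commute. -/
lemma mapι_mul_comm (P Q : Submodule R M) :
    P.map (ι R) * Q.map (ι R) = Q.map (ι R) * P.map (ι R) := by
  have key : ∀ P Q : Submodule R M, P.map (ι R) * Q.map (ι R) ≤ Q.map (ι R) * P.map (ι R) := by
    intro P Q
    rw [Submodule.mul_le]
    rintro _ ⟨p, hp, rfl⟩ _ ⟨q, hq, rfl⟩
    have h : ι R p * ι R q = -(ι R q * ι R p) := by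
      rw [eq_neg_iff_add_eq_zero]; exact ι_add_mul_swap p q
    rw [h]
    exact Submodule.neg_mem _ <| Submodule.mul_mem_mul
      (Submodule.mem_map_of_mem hq) (Submodule.mem_map_of_mem hp)
  exact le_antisymm (key P Q) (key Q P)

lemma ιMulti_eq_zero_of_rank (r : ℕ) {P : Submodule R M} (b : Module.Basis (Fin r) R ↥P)
    (g : Fin (r + 1) → ↥P) :
    ιMulti R (r + 1) (fun i => (g i : M)) = 0 := by
  have hrepr : (fun i : Fin (r+1) => (g i : M))
      = fun i => ∑ k : Fin r, b.repr (g i) k • ((b k : ↥P) : M) := by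
    funext i
    conv_lhs => rw [← b.sum_repr (g i)]
    rw [Submodule.coe_sum]
    simp
  rw [hrepr]
  have hms := MultilinearMap.map_sum
    (f := (ιMulti R (r+1) (M := M)).toMultilinearMap)
    (g := fun i k => b.repr (g i) k • ((b k : ↥P) : M))
  simp only [AlternatingMap.coe_multilinearMap] at hms
  rw [hms]
  refine Finset.sum_eq_zero fun t _ => ?_
  have hsmul := MultilinearMap.map_smul_univ
    ((ιMulti R (r+1) (M := M)).toMultilinearMap)
    (fun i => b.repr (g i) (t i)) (fun i => ((b (t i) : ↥P) : M))
  simp only [AlternatingMap.coe_multilinearMap] at hsmul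
  rw [hsmul]
  obtain ⟨i, j, hij, hieq⟩ := Fintype.exists_ne_map_eq_of_card_lt t (by simp)
  rw [(ιMulti R (r+1)).map_eq_zero_of_eq _ (by rw [hieq]) hij, smul_zero]

/-- A wedge of `r+1` elements of a free module of rank `r` vanishes. -/
lemma mapι_pow_eq_bot (P : Submodule R M) (r : ℕ) (b : Module.Basis (Fin r) R ↥P) :
    P.map (ι R) ^ (r + 1) = ⊥ := by
  rw [eq_bot_iff, Submodule.pow_eq_span_pow_set, Submodule.span_le]
  rintro x hx
  obtain ⟨f, rfl⟩ := Set.mem_pow.mp hx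
  have hch : ∀ i : Fin (r + 1), ∃ p : ↥P, ι R (p : M) = (f i : ExteriorAlgebra R M) := by
    intro i
    obtain ⟨p, hp, hip⟩ := (f i).2
    exact ⟨⟨p, hp⟩, hip⟩
  choose g hg using hch
  have hx' : (List.ofFn fun i => ((f i : ExteriorAlgebra R M))).prod
      = ιMulti R (r + 1) (fun i => (g i : M)) := by
    have hfg : (fun i => ((f i : ExteriorAlgebra R M))) = fun i => ι R ((g i : M)) :=
      funext fun i => (hg i).symm
    rw [hfg, ιMulti_apply]
  rw [SetLike.mem_coe, hx', ιMulti_eq_zero_of_rank r b g]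
  exact Submodule.zero_mem ⊥

section Semiring
variable {S A : Type*} [CommSemiring S] [Semiring A] [Algebra S A]

lemma submodule_sum_le {ι : Type*} (s : Finset ι) (f : ι → Submodule S A)
    {C : Submodule S A} (h : ∀ i ∈ s, f i ≤ C) : ∑ i ∈ s, f i ≤ C := by
  classical
  induction s using Finset.cons_induction with
  | empty => simp [Submodule.zero_eq_bot]
  | cons a s ha ih =>
    rw [Finset.sum_cons, Submodule.add_eq_sup]
    exact sup_le (h a (Finset.mem_cons_self a s)) (ih fun i hi => h i (Finset.mem_cons_of_mem hi))

lemma submodule_le_sum {ι : Type*} {s : Finset ι} (f : ι → Submodule S A)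
    {j : ι} (hj : j ∈ s) : f j ≤ ∑ i ∈ s, f i := by
  classical
  rw [← Finset.add_sum_erase s f hj, Submodule.add_eq_sup]
  exact le_sup_left

lemma pow_sup_le (P Q : Submodule S A) (h : P * Q = Q * P) (m : ℕ) :
    (P ⊔ Q) ^ m ≤ ∑ k ∈ Finset.range (m + 1), P ^ (m - k) * Q ^ k := by
  have hQP : ∀ j : ℕ, Q ^ j * P = P * Q ^ j := by
    intro j
    induction j with
    | zero => rw [pow_zero, one_mul, mul_one]
    | succ j ih =>
      rw [pow_succ, mul_assoc, ← h, ← mul_assoc, ih, mul_assoc]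
  induction m with
  | zero => simp
  | succ m ih =>
    rw [pow_succ]
    calc (P ⊔ Q) ^ m * (P ⊔ Q)
        ≤ (∑ k ∈ Finset.range (m + 1), P ^ (m - k) * Q ^ k) * (P ⊔ Q) :=
          mul_le_mul_left ih _
      _ = (∑ k ∈ Finset.range (m + 1), P ^ (m - k) * Q ^ k * P)
          ⊔ (∑ k ∈ Finset.range (m + 1), P ^ (m - k) * Q ^ k * Q) := by
          rw [Submodule.mul_sup, ← Finset.sum_mul, ← Finset.sum_mul]
      _ ≤ ∑ k ∈ Finset.range (m + 1 + 1), P ^ (m + 1 - k) * Q ^ k := by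
          apply sup_le
          · apply submodule_sum_le
            intro k hk
            have hkm : k ≤ m := Nat.lt_succ_iff.mp (Finset.mem_range.mp hk)
            have : P ^ (m - k) * Q ^ k * P = P ^ (m + 1 - k) * Q ^ k := by
              rw [mul_assoc, hQP, ← mul_assoc, ← pow_succ,
                show m - k + 1 = m + 1 - k from (Nat.succ_sub hkm).symm]
            rw [this]
            exact submodule_le_sum (s := Finset.range (m + 1 + 1)) (j := k) (fun k => P ^ (m + 1 - k) * Q ^ k) (Finset.mem_range.mpr (by omega))
          · apply submodule_sum_le
            intro k hk
            have hkm : k < m + 1 := Finset.mem_range.mp hk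
            have : P ^ (m - k) * Q ^ k * Q = P ^ (m + 1 - (k + 1)) * Q ^ (k + 1) := by
              rw [mul_assoc, ← pow_succ, Nat.succ_sub_succ]
            rw [this]
            exact submodule_le_sum (s := Finset.range (m + 1 + 1)) (j := k + 1) (fun k => P ^ (m + 1 - k) * Q ^ k) (Finset.mem_range.mpr (by omega))

end Semiring
end Aux

section Aux
variable {R : Type*} [CommRing R] {M : Type*} [AddCommGroup M] [Module R M]

lemma submodule_pow_le_pow {S A : Type*} [CommSemiring S] [Semiring A] [Algebra S A]
    {P Q : Submodule S A} (h : P ≤ Q) (m : ℕ) : P ^ m ≤ Q ^ m := by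
  induction m with
  | zero => simp
  | succ m ih => rw [pow_succ, pow_succ]; exact mul_le_mul' ih h

end Aux


/-- The canonical map `⋀^d N ⊗ ⋀^r M → ExteriorAlgebra R M` induced by the inclusion
`N ⊆ M` and the wedge product; its image lands in `⋀^{d+r} M`, and it sends
`(x₁∧…∧x_d) ⊗ (y₁∧…∧y_r)` to `x₁∧…∧x_d∧y₁∧…∧y_r`. -/
noncomputable def wedgeMulMap {R : Type*} [CommRing R]
    {M : Type*} [AddCommGroup M] [Module R M] (N : Submodule R M) (d r : ℕ) :
    (⋀[R]^d ↥N) ⊗[R] (⋀[R]^r M) →ₗ[R] ExteriorAlgebra R M :=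
  (LinearMap.mul' R (ExteriorAlgebra R M)) ∘ₗ
    TensorProduct.map
      ((ExteriorAlgebra.map N.subtype).toLinearMap ∘ₗ (⋀[R]^d (↥N)).subtype)
      ((⋀[R]^r M).subtype)



open TensorProduct ExteriorAlgebra Submodule

/-- Let `R` be a commutative ring, `n, r ≥ 1`, `M` a free `R`-module of
rank `n + r`, and `N ⊆ M` a direct summand which is free of rank `n` with `M/N` free of
rank `r`.  Then for `1 ≤ d ≤ n`, the canonical map `⋀^d N ⊗ ⋀^r M → ⋀^{d+r} M` is
surjective (i.e. its range is all of `⋀^{d+r} M`). -/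
theorem wedgeMulMap_surjective
    {R : Type*} [CommRing R] (n r : ℕ) (hn : 1 ≤ n) (hr : 1 ≤ r)
    {M : Type*} [AddCommGroup M] [Module R M] [Module.Free R M] [Module.Finite R M]
    (hrankM : Module.finrank R M = n + r)
    (N : Submodule R M) (hcompl : ∃ N' : Submodule R M, IsCompl N N')
    [Module.Free R ↥N] (hrankN : Module.finrank R ↥N = n)
    [Module.Free R (M ⧸ N)] (hrankQ : Module.finrank R (M ⧸ N) = r)
    (d : ℕ) (hd1 : 1 ≤ d) (hdn : d ≤ n) :
    LinearMap.range (wedgeMulMap N d r) = ⋀[R]^(d + r) M := by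
  classical
  rcases subsingleton_or_nontrivial R with hR | hR
  · haveI := Module.subsingleton R (ExteriorAlgebra R M)
    exact Subsingleton.elim _ _
  obtain ⟨N', hN'⟩ := hcompl
  set A := N.map (ExteriorAlgebra.ι R) with hAdef
  set B := N'.map (ExteriorAlgebra.ι R) with hBdef
  -- a basis of `N'` indexed by `Fin r`
  have hcard : Fintype.card (Module.Free.ChooseBasisIndex R (M ⧸ N)) = r := by
    rw [← Module.finrank_eq_card_chooseBasisIndex, hrankQ]
  let e : (M ⧸ N) ≃ₗ[R] ↥N' := Submodule.quotientEquivOfIsCompl N N' hN'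
  let bN' : Module.Basis (Fin r) R ↥N' :=
    ((Module.Free.chooseBasis R (M ⧸ N)).reindex (Fintype.equivFinOfCardEq hcard)).map e
  have hBpow : B ^ (r + 1) = ⊥ := mapι_pow_eq_bot N' r bN'
  have hι : LinearMap.range (ExteriorAlgebra.ι R (M := M)) = A ⊔ B := by
    rw [LinearMap.range_eq_map, ← hN'.sup_eq_top, Submodule.map_sup]
  have hAd : Submodule.map (ExteriorAlgebra.map N.subtype).toLinearMap (⋀[R]^d ↥N) = A ^ d := by
    show Submodule.map _ ((LinearMap.range (ExteriorAlgebra.ι R (M := ↥N))) ^ d) = A ^ d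
    rw [Submodule.map_pow]
    congr 1
    rw [LinearMap.range_eq_map, ← Submodule.map_comp, map_comp_ι, Submodule.map_comp,
      Submodule.map_subtype_top]
  -- the range of `wedgeMulMap` is `A ^ d * ⋀^r M`
  have hrange : LinearMap.range (wedgeMulMap N d r) = A ^ d * ⋀[R]^r M := by
    apply le_antisymm
    · rintro x ⟨t, rfl⟩
      induction t using TensorProduct.induction_on with
      | zero => rw [LinearMap.map_zero]; exact Submodule.zero_mem _
      | tmul a b =>
        have hab : wedgeMulMap N d r (a ⊗ₜ b) = (ExteriorAlgebra.map N.subtype) (a : _) * (b : _) := by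
          simp [wedgeMulMap]
        rw [hab]
        exact Submodule.mul_mem_mul (hAd ▸ Submodule.mem_map_of_mem a.2) b.2
      | add x y hx hy => rw [LinearMap.map_add]; exact Submodule.add_mem _ hx hy
    · rw [Submodule.mul_le]
      intro x hx y hy
      rw [← hAd] at hx
      obtain ⟨a, ha, rfl⟩ := hx
      exact ⟨(⟨a, ha⟩ : ⋀[R]^d ↥N) ⊗ₜ (⟨y, hy⟩ : ⋀[R]^r M), by simp [wedgeMulMap]⟩
  rw [hrange]
  have hpow : (⋀[R]^(d+r) M : Submodule R (ExteriorAlgebra R M)) = (A ⊔ B) ^ (d + r) := by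
    show (LinearMap.range (ExteriorAlgebra.ι R (M := M))) ^ (d + r) = _
    rw [hι]
  have hpowr : (⋀[R]^r M : Submodule R (ExteriorAlgebra R M)) = (A ⊔ B) ^ r := by
    show (LinearMap.range (ExteriorAlgebra.ι R (M := M))) ^ r = _
    rw [hι]
  apply le_antisymm
  · rw [hpow, hpowr]
    refine le_trans (mul_le_mul' (submodule_pow_le_pow (le_sup_left : A ≤ A ⊔ B) d) le_rfl) ?_
    rw [← pow_add]
  · rw [hpow]
    refine le_trans (pow_sup_le A B (mapι_mul_comm N N') (d + r)) ?_
    apply submodule_sum_le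
    intro k hk
    rw [Finset.mem_range] at hk
    by_cases hkr : k ≤ r
    · have h1 : A ^ (d + r - k) = A ^ d * A ^ (r - k) := by
        rw [← pow_add]; congr 1; omega
      rw [h1, mul_assoc]
      refine mul_le_mul_right ?_ _
      rw [hpowr]
      have : (A ⊔ B) ^ (r - k) * (A ⊔ B) ^ k = (A ⊔ B) ^ r := by
        rw [← pow_add]; congr 1; omega
      rw [← this]
      exact mul_le_mul' (submodule_pow_le_pow le_sup_left _)
        (submodule_pow_le_pow le_sup_right _)
    · have h2 : B ^ k = ⊥ := by
        have : B ^ k = B ^ (r + 1) * B ^ (k - (r + 1)) := by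
          rw [← pow_add]; congr 1; omega
        rw [this, hBpow, Submodule.bot_mul]
      rw [h2, Submodule.mul_bot]
      exact bot_le
end

section
/- Let p be a prime, L a finite field extension of ℚ_p, and O_L the integral closure of ℤ_p in L. Suppose π ∈ O_L and u ∈ O_L is a unit such that p = u·π^e for some integer e ≥ 1. Let R be a commutative ring in which p = 0, set A = R ⊗_{ℤ_p} O_L, and let M be a free A-module. Then for every integer 0 ≤ j ≤ e−1, multiplication by π^j induces an isomorphism of A-modules M/(π·M) ≅ (π^j·M)/(π^{j+1}·M). -/
open TensorProduct

set_option synthInstance.maxHeartbeats 1000000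
set_option maxHeartbeats 2000000

/-- On a `p`-torsion `ℤ_[p]`-module, the action of `r` is by `(toZMod r).val`. -/
theorem padic_smul_eq_val_nsmul (p : ℕ) [Fact p.Prime]
    {X : Type*} [AddCommGroup X] [Module ℤ_[p] X]
    (hX : ∀ x : X, ((p : ℕ) : ℤ_[p]) • x = 0)
    (r : ℤ_[p]) (x : X) : r • x = ((PadicInt.toZMod r).val) • x := by
  have hmem : (p : ℤ_[p]) ∣ r - (ZMod.cast (PadicInt.toZMod r) : ℤ_[p]) := by
    have h0 := PadicInt.toZMod_spec r
    rw [PadicInt.maximalIdeal_eq_span_p, Ideal.mem_span_singleton] at h0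
    exact h0
  obtain ⟨s, hs⟩ := hmem
  have hcast : (ZMod.cast (PadicInt.toZMod r) : ℤ_[p])
      = (((PadicInt.toZMod r).val : ℕ) : ℤ_[p]) := by
    rw [ZMod.natCast_val]
  have hr : r = (((PadicInt.toZMod r).val : ℕ) : ℤ_[p]) + (p : ℤ_[p]) * s := by
    rw [← hcast]; linear_combination hs
  have h2 : r • x = ((((PadicInt.toZMod r).val : ℕ) : ℤ_[p])) • x
      + ((p : ℤ_[p]) * s) • x := by
    rw [← add_smul, ← hr]
  rw [h2, mul_comm, mul_smul, hX, smul_zero, add_zero, Nat.cast_smul_eq_nsmul]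

/-- An injective additive map of `ZMod p`-modules has an additive left inverse. -/
theorem exists_addHom_leftInverse (p : ℕ) [Fact p.Prime]
    {V W : Type*} [AddCommGroup V] [AddCommGroup W]
    [Module (ZMod p) V] [Module (ZMod p) W]
    (f : V →+ W) (hf : Function.Injective f) :
    ∃ g : W →+ V, ∀ v : V, g (f v) = v := by
  obtain ⟨g', hg'⟩ := (f.toZModLinearMap p).exists_leftInverse_of_injective
    (by rw [LinearMap.ker_eq_bot]; exact hf)
  exact ⟨g'.toAddMonoidHom, fun v => LinearMap.congr_fun hg' v⟩

/-- Any injective `ℤ_[p]`-linear map between `p`-torsion modules has a left inverse. -/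
theorem exists_leftInverse_of_p_torsion (p : ℕ) [Fact p.Prime]
    {V W : Type*} [AddCommGroup V] [AddCommGroup W]
    [Module ℤ_[p] V] [Module ℤ_[p] W]
    (hV : ∀ v : V, ((p : ℕ) : ℤ_[p]) • v = 0) (hW : ∀ w : W, ((p : ℕ) : ℤ_[p]) • w = 0)
    (f : V →ₗ[ℤ_[p]] W) (hf : Function.Injective f) :
    ∃ g : W →ₗ[ℤ_[p]] V, g.comp f = LinearMap.id := by
  haveI : NeZero p := ⟨(Fact.out : p.Prime).ne_zero⟩
  have hVn : ∀ v : V, p • v = 0 := fun v => by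
    rw [← Nat.cast_smul_eq_nsmul ℤ_[p]]; exact hV v
  have hWn : ∀ w : W, p • w = 0 := fun w => by
    rw [← Nat.cast_smul_eq_nsmul ℤ_[p]]; exact hW w
  obtain ⟨g, hg⟩ :=
    letI : Module (ZMod p) V := AddCommGroup.zmodModule hVn
    letI : Module (ZMod p) W := AddCommGroup.zmodModule hWn
    exists_addHom_leftInverse p f.toAddMonoidHom hf
  refine ⟨LinearMap.mk (AddHom.mk (fun w => g w) (fun x y => g.map_add x y)) ?_, ?_⟩
  · intro r w
    simp only [RingHom.id_apply]
    have h1 : g (r • w) = g (((PadicInt.toZMod r).val) • w) := congrArg g (padic_smul_eq_val_nsmul p hW r w)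
    have h2 : g (((PadicInt.toZMod r).val) • w) = ((PadicInt.toZMod r).val) • g w :=
      map_nsmul g _ _
    show g (r • w) = r • g w
    rw [h1, h2, padic_smul_eq_val_nsmul p hV r (g w)]
  · ext v
    exact hg v

/-- Core divisibility lemma in `R ⊗[ℤ_[p]] O_L`. -/
theorem core_exists (p : ℕ) [Fact p.Prime]
    (L : Type*) [Field L] [Algebra ℚ_[p] L]
    [Algebra ℤ_[p] L] [IsScalarTower ℤ_[p] ℚ_[p] L]
    (π : ↥(integralClosure ℤ_[p] L)) (u : (↥(integralClosure ℤ_[p] L))ˣ)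
    (e : ℕ)
    (hpu : ((p : ℕ) : ↥(integralClosure ℤ_[p] L)) = (u : ↥(integralClosure ℤ_[p] L)) * π ^ e)
    (R : Type*) [CommRing R] [Algebra ℤ_[p] R]
    (j : ℕ) (hj : j + 1 ≤ e)
    (z y : R ⊗[ℤ_[p]] ↥(integralClosure ℤ_[p] L))
    (hzy : ((1 : R) ⊗ₜ[ℤ_[p]] (π : ↥(integralClosure ℤ_[p] L))) ^ j * z
         = ((1 : R) ⊗ₜ[ℤ_[p]] (π : ↥(integralClosure ℤ_[p] L))) ^ (j + 1) * y) :
    ∃ c, z = ((1 : R) ⊗ₜ[ℤ_[p]] (π : ↥(integralClosure ℤ_[p] L))) * c := by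
  haveI : CharZero L := charZero_of_injective_algebraMap (algebraMap ℚ_[p] L).injective
  have he0 : e ≠ 0 := by omega
  -- p ≠ 0 in the integral closure
  have hp0 : ((p : ℕ) : ↥(integralClosure ℤ_[p] L)) ≠ 0 := by
    intro h
    have h2 : ((p : ℕ) : L) = 0 := by exact_mod_cast congrArg (Subtype.val) h
    exact (Nat.cast_ne_zero.mpr (Fact.out : p.Prime).ne_zero) h2
  have hπ : π ≠ 0 := by
    intro h
    apply hp0
    rw [hpu, h, zero_pow he0, mul_zero]
  -- Submodules
  set N₁ : Submodule ℤ_[p] ↥(integralClosure ℤ_[p] L) :=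
    Submodule.restrictScalars ℤ_[p] (Ideal.span {π}) with hN₁
  set N₂ : Submodule ℤ_[p] ↥(integralClosure ℤ_[p] L) :=
    Submodule.restrictScalars ℤ_[p] (Ideal.span {π ^ (j + 1)}) with hN₂
  have memN₁ : ∀ x, x ∈ N₁ ↔ π ∣ x := by
    intro x
    rw [hN₁, Submodule.restrictScalars_mem, Ideal.mem_span_singleton]
  have memN₂ : ∀ x, x ∈ N₂ ↔ π ^ (j + 1) ∣ x := by
    intro x
    rw [hN₂, Submodule.restrictScalars_mem, Ideal.mem_span_singleton]
  -- the map ψ : C/π → C/π^{j+1} induced by multiplication by π^j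
  have hcomap : N₁ ≤ N₂.comap (LinearMap.mulLeft ℤ_[p] (π ^ j)) := by
    intro x hx
    obtain ⟨c, rfl⟩ := (memN₁ x).mp hx
    rw [Submodule.mem_comap, LinearMap.mulLeft_apply]
    exact (memN₂ _).mpr ⟨c, by ring⟩
  set ψ := Submodule.mapQ N₁ N₂ (LinearMap.mulLeft ℤ_[p] (π ^ j)) hcomap with hψ
  -- torsion
  have hsmul : ∀ x : ↥(integralClosure ℤ_[p] L),
      ((p : ℕ) : ℤ_[p]) • x = ((p : ℕ) : ↥(integralClosure ℤ_[p] L)) * x := by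
    intro x
    rw [Algebra.smul_def, map_natCast]
  have hV₁ : ∀ v : (↥(integralClosure ℤ_[p] L) ⧸ N₁), ((p : ℕ) : ℤ_[p]) • v = 0 := by
    intro v
    obtain ⟨x, rfl⟩ := Submodule.Quotient.mk_surjective N₁ v
    rw [← Submodule.Quotient.mk_smul, Submodule.Quotient.mk_eq_zero]
    rw [hsmul, hpu]
    exact (memN₁ _).mpr (((dvd_pow_self π he0).mul_left _).mul_right _)
  have hV₂ : ∀ v : (↥(integralClosure ℤ_[p] L) ⧸ N₂), ((p : ℕ) : ℤ_[p]) • v = 0 := by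
    intro v
    obtain ⟨x, rfl⟩ := Submodule.Quotient.mk_surjective N₂ v
    rw [← Submodule.Quotient.mk_smul, Submodule.Quotient.mk_eq_zero]
    rw [hsmul, hpu]
    exact (memN₂ _).mpr (((pow_dvd_pow π hj).mul_left _).mul_right _)
  -- ψ is injective
  have hinj : Function.Injective ψ := by
    rw [← LinearMap.ker_eq_bot]
    rw [eq_bot_iff]
    intro v hv
    obtain ⟨x, rfl⟩ := Submodule.Quotient.mk_surjective N₁ v
    rw [LinearMap.mem_ker, hψ, Submodule.mapQ_apply, LinearMap.mulLeft_apply,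
      Submodule.Quotient.mk_eq_zero] at hv
    obtain ⟨c, hc⟩ := (memN₂ _).mp hv
    rw [Submodule.mem_bot, Submodule.Quotient.mk_eq_zero]
    refine (memN₁ x).mpr ⟨c, ?_⟩
    have hcancel : π ^ j * x = π ^ j * (π * c) := by
      rw [hc]; ring
    exact mul_left_cancel₀ (pow_ne_zero j hπ) hcancel
  -- left inverse of ψ
  obtain ⟨g, hg⟩ := exists_leftInverse_of_p_torsion p hV₁ hV₂ ψ hinj
  -- tensored maps
  have hmul : ∀ (d : ↥(integralClosure ℤ_[p] L)) (x : R ⊗[ℤ_[p]] ↥(integralClosure ℤ_[p] L)),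
      LinearMap.lTensor R (LinearMap.mulLeft ℤ_[p] d) x = ((1 : R) ⊗ₜ[ℤ_[p]] d) * x := by
    intro d x
    induction x with
    | zero => simp
    | tmul r c => simp [Algebra.TensorProduct.tmul_mul_tmul]
    | add a b ha hb => rw [map_add, mul_add, ha, hb]
  have htp : ∀ k : ℕ, ((1 : R) ⊗ₜ[ℤ_[p]] (π : ↥(integralClosure ℤ_[p] L))) ^ k
      = (1 : R) ⊗ₜ[ℤ_[p]] (π ^ k) := by
    intro k
    rw [Algebra.TensorProduct.tmul_pow, one_pow]
  -- commuting square
  have hcomm : LinearMap.lTensor R ψ ((LinearMap.lTensor R N₁.mkQ) z)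
      = (LinearMap.lTensor R N₂.mkQ)
          (((1 : R) ⊗ₜ[ℤ_[p]] (π : ↥(integralClosure ℤ_[p] L))) ^ j * z) := by
    rw [htp, ← hmul]
    rw [← LinearMap.comp_apply, ← LinearMap.lTensor_comp, hψ, Submodule.mapQ_mkQ,
      LinearMap.lTensor_comp, LinearMap.comp_apply]
  -- the target is killed
  have hzero : (LinearMap.lTensor R N₂.mkQ)
      (((1 : R) ⊗ₜ[ℤ_[p]] (π : ↥(integralClosure ℤ_[p] L))) ^ (j + 1) * y) = 0 := by
    rw [htp, ← hmul]
    rw [← LinearMap.comp_apply, ← LinearMap.lTensor_comp]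
    have hcomp0 : N₂.mkQ.comp (LinearMap.mulLeft ℤ_[p] (π ^ (j + 1))) = 0 := by
      ext c
      rw [LinearMap.comp_apply, LinearMap.mulLeft_apply, LinearMap.zero_apply,
        Submodule.mkQ_apply, Submodule.Quotient.mk_eq_zero]
      exact (memN₂ _).mpr (dvd_mul_right _ _)
    rw [hcomp0, LinearMap.lTensor_zero, LinearMap.zero_apply]
  -- lTensor R ψ is injective
  have hinj2 : Function.Injective (LinearMap.lTensor R ψ) := by
    have hli : (LinearMap.lTensor R g).comp (LinearMap.lTensor R ψ) = LinearMap.id := by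
      rw [← LinearMap.lTensor_comp, hg, LinearMap.lTensor_id]
    intro a b hab
    have := congrArg (LinearMap.lTensor R g) hab
    rw [← LinearMap.comp_apply, ← LinearMap.comp_apply, hli, LinearMap.id_apply,
      LinearMap.id_apply] at this
    exact this
  -- conclude Q₁ z = 0
  have hQ₁z : (LinearMap.lTensor R N₁.mkQ) z = 0 := by
    apply hinj2
    rw [map_zero, hcomm, hzy, hzero]
  -- hence z is in the image of R ⊗ N₁
  have hzmem : z ∈ LinearMap.range (LinearMap.lTensor R N₁.subtype) := by
    rw [← lTensor_mkQ R N₁]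
    exact LinearMap.mem_ker.mpr hQ₁z
  obtain ⟨w, rfl⟩ := hzmem
  -- elements in the image of R ⊗ N₁ are multiples of 1 ⊗ π
  clear hcomm hQ₁z hzy
  induction w with
  | zero => exact ⟨0, by simp⟩
  | tmul r m =>
    obtain ⟨d, hd⟩ := (memN₁ (m : ↥(integralClosure ℤ_[p] L))).mp m.2
    refine ⟨r ⊗ₜ[ℤ_[p]] d, ?_⟩
    rw [LinearMap.lTensor_tmul, Submodule.coe_subtype, hd,
      Algebra.TensorProduct.tmul_mul_tmul, one_mul]
  | add a b ha hb =>
    obtain ⟨c₁, hc₁⟩ := ha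
    obtain ⟨c₂, hc₂⟩ := hb
    exact ⟨c₁ + c₂, by rw [map_add, hc₁, hc₂, mul_add]⟩

/-- Let `p` be a prime, `L` a finite extension of `ℚ_p`, `O_L` the integral
closure of `ℤ_p` in `L`, `π ∈ O_L` and `u ∈ O_Lˣ` with `p = u·π^e`, `e ≥ 1`.  Let `R` be a
commutative ring in which `p = 0` (viewed as a `ℤ_p`-algebra), `A = R ⊗_{ℤ_p} O_L`, and `M`
a free `A`-module.  Then for `0 ≤ j ≤ e - 1`, multiplication by `π^j` induces an
isomorphism `M/(π·M) ≅ (π^j·M)/(π^{j+1}·M)`: the composite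
`M → M ⧸ π^{j+1}M`, `x ↦ π^j·x mod π^{j+1}M`, has kernel `π·M` and range the image of
`π^j·M` in `M ⧸ π^{j+1}M`. -/
theorem mul_pow_uniformizer_induces_iso
    (p : ℕ) [Fact p.Prime]
    (L : Type*) [Field L] [Algebra ℚ_[p] L] [FiniteDimensional ℚ_[p] L]
    [Algebra ℤ_[p] L] [IsScalarTower ℤ_[p] ℚ_[p] L]
    (π : ↥(integralClosure ℤ_[p] L)) (u : (↥(integralClosure ℤ_[p] L))ˣ)
    (e : ℕ) (he : 1 ≤ e)
    (hpu : ((p : ℕ) : ↥(integralClosure ℤ_[p] L)) = (u : ↥(integralClosure ℤ_[p] L)) * π ^ e)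
    (R : Type*) [CommRing R] [Algebra ℤ_[p] R] (hpR : ((p : ℕ) : R) = 0)
    (M : Type*) [AddCommGroup M]
    [Module (R ⊗[ℤ_[p]] ↥(integralClosure ℤ_[p] L)) M]
    [Module.Free (R ⊗[ℤ_[p]] ↥(integralClosure ℤ_[p] L)) M]
    (j : ℕ) (hj : j ≤ e - 1) :
    LinearMap.ker
        ((Submodule.mkQ (LinearMap.range
            ((((1 : R) ⊗ₜ[ℤ_[p]] (π : ↥(integralClosure ℤ_[p] L))) ^ (j + 1)) •
              (LinearMap.id : M →ₗ[R ⊗[ℤ_[p]] ↥(integralClosure ℤ_[p] L)] M)))) ∘ₗ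
          ((((1 : R) ⊗ₜ[ℤ_[p]] (π : ↥(integralClosure ℤ_[p] L))) ^ j) •
            (LinearMap.id : M →ₗ[R ⊗[ℤ_[p]] ↥(integralClosure ℤ_[p] L)] M)))
      = LinearMap.range
          ((((1 : R) ⊗ₜ[ℤ_[p]] (π : ↥(integralClosure ℤ_[p] L)))) •
            (LinearMap.id : M →ₗ[R ⊗[ℤ_[p]] ↥(integralClosure ℤ_[p] L)] M)) ∧
    LinearMap.range
        ((Submodule.mkQ (LinearMap.range
            ((((1 : R) ⊗ₜ[ℤ_[p]] (π : ↥(integralClosure ℤ_[p] L))) ^ (j + 1)) •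
              (LinearMap.id : M →ₗ[R ⊗[ℤ_[p]] ↥(integralClosure ℤ_[p] L)] M)))) ∘ₗ
          ((((1 : R) ⊗ₜ[ℤ_[p]] (π : ↥(integralClosure ℤ_[p] L))) ^ j) •
            (LinearMap.id : M →ₗ[R ⊗[ℤ_[p]] ↥(integralClosure ℤ_[p] L)] M)))
      = Submodule.map
          (Submodule.mkQ (LinearMap.range
            ((((1 : R) ⊗ₜ[ℤ_[p]] (π : ↥(integralClosure ℤ_[p] L))) ^ (j + 1)) •
              (LinearMap.id : M →ₗ[R ⊗[ℤ_[p]] ↥(integralClosure ℤ_[p] L)] M))))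
          (LinearMap.range
            ((((1 : R) ⊗ₜ[ℤ_[p]] (π : ↥(integralClosure ℤ_[p] L))) ^ j) •
              (LinearMap.id : M →ₗ[R ⊗[ℤ_[p]] ↥(integralClosure ℤ_[p] L)] M))) := by
  have hj1 : j + 1 ≤ e := by omega
  constructor
  · ext x
    simp only [LinearMap.mem_ker, LinearMap.comp_apply, LinearMap.smul_apply,
      LinearMap.id_apply, Submodule.mkQ_apply, Submodule.Quotient.mk_eq_zero,
      LinearMap.mem_range]
    constructor
    · rintro ⟨y, hy⟩
      set b := Module.Free.chooseBasis (R ⊗[ℤ_[p]] ↥(integralClosure ℤ_[p] L)) M with hb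
      have hco : ∀ i, ((1 : R) ⊗ₜ[ℤ_[p]] (π : ↥(integralClosure ℤ_[p] L))) ^ (j + 1)
            * (b.repr y i)
          = ((1 : R) ⊗ₜ[ℤ_[p]] (π : ↥(integralClosure ℤ_[p] L))) ^ j * (b.repr x i) := by
        intro i
        have h := congrArg (fun m => b.repr m i) hy
        simpa [map_smul, Finsupp.smul_apply, smul_eq_mul] using h
      have hex : ∀ i, ∃ c, b.repr x i
          = ((1 : R) ⊗ₜ[ℤ_[p]] (π : ↥(integralClosure ℤ_[p] L))) * c :=
        fun i => core_exists p L π u e hpu R j hj1 _ _ (hco i).symm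
      choose c hc using hex
      refine ⟨∑ i ∈ (b.repr x).support, c i • b i, ?_⟩
      rw [Finset.smul_sum]
      have hterm : ∀ i ∈ (b.repr x).support,
          ((1 : R) ⊗ₜ[ℤ_[p]] (π : ↥(integralClosure ℤ_[p] L))) • (c i • b i)
            = (b.repr x i) • b i := by
        intro i _
        rw [smul_smul, ← hc i]
      rw [Finset.sum_congr rfl hterm]
      have hxr := b.linearCombination_repr x
      rw [Finsupp.linearCombination_apply, Finsupp.sum] at hxr
      exact hxr
    · rintro ⟨t, ht⟩
      refine ⟨t, ?_⟩
      rw [← ht, pow_succ, mul_smul]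
  · exact LinearMap.range_comp _ _
end

section
/- Let R be a discrete valuation ring with uniformizer π, let M be a free R-module of finite rank, let e ≥ 1 be an integer, and let Fil⁰ ⊆ Fil¹ ⊆ ⋯ ⊆ Fil^e ⊆ M be a chain of submodules such that Fil⁰ ⊆ π^e·M, π·Fil^i ⊆ Fil^{i−1} for 1 ≤ i ≤ e, and the R-module Fil^i/Fil^{i−1} has length d_i for 1 ≤ i ≤ e. Then for every integer d ≥ 1 and every 0 ≤ i ≤ e, the image of the canonical map ⋀^d Fil^i → ⋀^d M is contained in π^{e·d − ∑_{j=1}^{i} min(d, d_j)} · ⋀^d M. -/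
set_option linter.unusedSectionVars false
set_option maxHeartbeats 1600000

open Pointwise

namespace ExtDiv

open ExteriorAlgebra CliffordAlgebra


open ExteriorAlgebra CliffordAlgebra

variable {R : Type*} [CommRing R] {M : Type*} [AddCommGroup M] [Module R M]
variable {K : Type*} [LinearOrder K]

noncomputable def wl (b : Module.Basis K R M) (l : List K) : ExteriorAlgebra R M :=
  (l.map fun i => ExteriorAlgebra.ι R (b i)).prod

@[simp] lemma wl_nil (b : Module.Basis K R M) : wl b [] = 1 := rfl

lemma wl_cons (b : Module.Basis K R M) (j : K) (t : List K) :
    wl b (j :: t) = ExteriorAlgebra.ι R (b j) * wl b t := by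
  simp [wl]

lemma coord_basis (b : Module.Basis K R M) (x j : K) :
    b.coord j (b x) = if x = j then 1 else 0 := by
  simp [Module.Basis.coord_apply, Module.Basis.repr_self, Finsupp.single_apply]

/-- Iterated contraction along a list of indices. -/
noncomputable def D (b : Module.Basis K R M) :
    List K → ExteriorAlgebra R M →ₗ[R] ExteriorAlgebra R M
  | [] => LinearMap.id
  | j :: t => (D b t).comp (contractLeft (Q := (0 : QuadraticForm R M)) (b.coord j))

@[simp] lemma D_nil (b : Module.Basis K R M) (x : ExteriorAlgebra R M) : D b [] x = x := rfl

lemma D_cons (b : Module.Basis K R M) (j : K) (t : List K) (x : ExteriorAlgebra R M) :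
    D b (j :: t) x = D b t (contractLeft (Q := (0 : QuadraticForm R M)) (b.coord j) x) := rfl

lemma algebraMapInv_ι (x : M) : algebraMapInv (ι R x) = (0 : R) := by
  simp [ExteriorAlgebra.algebraMapInv, ExteriorAlgebra.lift_ι_apply]

lemma contract_wl_eq_zero (b : Module.Basis K R M) (j : K) :
    ∀ t : List K, j ∉ t →
      contractLeft (Q := (0 : QuadraticForm R M)) (b.coord j) (wl b t) = 0 := by
  intro t
  induction t with
  | nil => intro _; simpa using contractLeft_one (0 : QuadraticForm R M) (b.coord j)
  | cons x t ih =>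
    intro hj
    rw [wl_cons, contractLeft_ι_mul, ih (fun h => hj (List.mem_cons_of_mem _ h)),
      coord_basis, if_neg (fun h => hj (List.mem_cons.2 (Or.inl h.symm))), mul_zero, zero_smul,
      sub_zero]

lemma D_ι_mul (b : Module.Basis K R M) (j' : K) :
    ∀ (m : List K), (∀ x ∈ m, x ≠ j') → ∀ y : ExteriorAlgebra R M,
      ∃ z : ExteriorAlgebra R M, D b m (ExteriorAlgebra.ι R (b j') * y) =
        ExteriorAlgebra.ι R (b j') * z := by
  intro m
  induction m with
  | nil => intro _ y; exact ⟨y, rfl⟩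
  | cons j t ih =>
    intro h y
    rw [D_cons, contractLeft_ι_mul, coord_basis,
      if_neg (fun hh => (h j (List.mem_cons_self (a := j) (l := t))) hh.symm), zero_smul, zero_sub, map_neg]
    obtain ⟨z, hz⟩ := ih (fun x hx => h x (List.mem_cons_of_mem _ hx)) _
    exact ⟨-z, by rw [hz, mul_neg]⟩

lemma orth (b : Module.Basis K R M) :
    ∀ (m m' : List K), m.IsChain (· < ·) → m'.IsChain (· < ·) →
      algebraMapInv (D b m (wl b m')) = if m = m' then (1 : R) else 0 := by
  intro m
  induction m with
  | nil =>
    intro m' _ _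
    cases m' with
    | nil => simp
    | cons j' t' =>
      rw [D_nil, wl_cons, map_mul, algebraMapInv_ι, zero_mul, if_neg (by simp)]
  | cons j t ih =>
    intro m' hm hm'
    have htc : t.IsChain (· < ·) := hm.tail
    have hjt : ∀ x ∈ t, j < x := by
      rw [List.isChain_iff_pairwise] at hm
      exact (List.pairwise_cons.1 hm).1
    cases m' with
    | nil =>
      rw [wl_nil, D_cons]
      rw [show contractLeft (Q := (0 : QuadraticForm R M)) (b.coord j) 1 = 0 from
        contractLeft_one _ _, map_zero, map_zero, if_neg (by simp)]
    | cons j' t' =>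
      have ht'c : t'.IsChain (· < ·) := hm'.tail
      have hjt' : ∀ x ∈ t', j' < x := by
        rw [List.isChain_iff_pairwise] at hm'
        exact (List.pairwise_cons.1 hm').1
      rcases lt_trichotomy j j' with hlt | heq | hgt
      · -- j < j' : j not in m', contraction kills
        have : j ∉ (j' :: t') := by
          intro h
          rcases List.mem_cons.1 h with h | h
          · exact absurd (h ▸ hlt) (lt_irrefl _)
          · exact absurd (hlt.trans (hjt' _ h)) (lt_irrefl _)
        rw [D_cons, contract_wl_eq_zero b j _ this, map_zero, map_zero,
          if_neg (by intro h; injection h with h1 _; exact absurd (h1 ▸ hlt) (lt_irrefl _))]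
      · -- j = j'
        subst heq
        rw [D_cons, wl_cons, contractLeft_ι_mul, coord_basis, if_pos rfl,
          contract_wl_eq_zero b j t' (fun h => absurd (hjt' _ h) (lt_irrefl _)),
          mul_zero, sub_zero, one_smul, ih t' htc ht'c]
        by_cases h : t = t'
        · rw [if_pos h, if_pos (by rw [h])]
        · rw [if_neg h, if_neg (fun hh => h (by injection hh))]
      · -- j > j'
        have hne : ∀ x ∈ t, x ≠ j' := fun x hx => (hgt.trans (hjt x hx)).ne'
        rw [D_cons, wl_cons, contractLeft_ι_mul, coord_basis,
          if_neg (fun h => absurd (h ▸ hgt) (lt_irrefl _)), zero_smul, zero_sub, map_neg,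
          map_neg]
        obtain ⟨z, hz⟩ := D_ι_mul b j' t hne
          (contractLeft (Q := (0 : QuadraticForm R M)) (b.coord j) (wl b t'))
        rw [hz, map_mul, algebraMapInv_ι, zero_mul, neg_zero,
          if_neg (fun h => by injection h with h1 _; exact absurd (h1 ▸ hgt) (lt_irrefl _))]


lemma anticomm (x y : M) (z : ExteriorAlgebra R M) :
    ExteriorAlgebra.ι R x * (ExteriorAlgebra.ι R y * z) =
      -(ExteriorAlgebra.ι R y * (ExteriorAlgebra.ι R x * z)) := by
  rw [← mul_assoc, ← mul_assoc,
    show ExteriorAlgebra.ι R x * ExteriorAlgebra.ι R y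
        = -(ExteriorAlgebra.ι R y * ExteriorAlgebra.ι R x) from
      eq_neg_of_add_eq_zero_left (ExteriorAlgebra.ι_add_mul_swap x y), neg_mul]

lemma ins (b : Module.Basis K R M) :
    ∀ l : List K, l.IsChain (· < ·) → ∀ i : K,
      ∃ (c : R) (m : List K), m.IsChain (· < ·) ∧ (∀ x ∈ m, x ∈ i :: l) ∧
        ExteriorAlgebra.ι R (b i) * wl b l = c • wl b m := by
  intro l
  induction l with
  | nil =>
    intro _ i
    exact ⟨1, [i], by simp, by simp, by rw [one_smul, wl_cons, wl_nil]⟩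
  | cons j t ih =>
    intro hc i
    have htc := hc.tail
    have hjt : ∀ x ∈ t, j < x := (List.pairwise_cons.1 (List.isChain_iff_pairwise.1 hc)).1
    rcases lt_trichotomy i j with hlt | heq | hgt
    · refine ⟨1, i :: j :: t, ?_, fun x hx => hx, by simp [wl_cons]⟩
      exact List.isChain_iff_pairwise.2 (List.pairwise_cons.2
        ⟨fun x hx => by
          rcases List.mem_cons.1 hx with h | h
          · exact h ▸ hlt
          · exact hlt.trans (hjt x h),
        List.isChain_iff_pairwise.1 hc⟩)
    · subst heq
      exact ⟨0, [], by simp, by simp, by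
        rw [wl_cons, ← mul_assoc, ExteriorAlgebra.ι_sq_zero, zero_mul, zero_smul]⟩
    · obtain ⟨c, m, hmc, hmem, heq⟩ := ih htc i
      have hjm : ∀ x ∈ m, j < x := by
        intro x hx
        rcases List.mem_cons.1 (hmem x hx) with h | h
        · exact h ▸ hgt
        · exact hjt x h
      refine ⟨-c, j :: m, ?_, ?_, ?_⟩
      · exact List.isChain_iff_pairwise.2
          (List.pairwise_cons.2 ⟨hjm, List.isChain_iff_pairwise.1 hmc⟩)
      · intro x hx
        rcases List.mem_cons.1 hx with h | h
        · exact List.mem_cons.2 (Or.inr (h ▸ List.mem_cons_self (a := j) (l := t)))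
        · rcases List.mem_cons.1 (hmem x h) with h' | h'
          · exact List.mem_cons.2 (Or.inl h')
          · exact List.mem_cons.2 (Or.inr (List.mem_cons.2 (Or.inr h')))
      · rw [wl_cons, anticomm, heq, wl_cons, mul_smul_comm, ← neg_smul]

variable [Fintype K]

noncomputable def sortedSpan (b : Module.Basis K R M) : Submodule R (ExteriorAlgebra R M) :=
  Submodule.span R (Set.range fun m : {l : List K // l.IsChain (· < ·)} => wl b m.1)

lemma wl_mem_sortedSpan (b : Module.Basis K R M) {m : List K} (hm : m.IsChain (· < ·)) :
    wl b m ∈ sortedSpan b :=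
  Submodule.subset_span ⟨⟨m, hm⟩, rfl⟩

lemma ι_basis_mul_mem (b : Module.Basis K R M) (i : K) {p : ExteriorAlgebra R M}
    (hp : p ∈ sortedSpan b) : ExteriorAlgebra.ι R (b i) * p ∈ sortedSpan b := by
  induction hp using Submodule.span_induction with
  | mem x hx =>
    obtain ⟨⟨m, hm⟩, rfl⟩ := hx
    obtain ⟨c, m', hm'c, _, heq⟩ := ins b m hm i
    rw [heq]
    exact Submodule.smul_mem _ _ (wl_mem_sortedSpan b hm'c)
  | zero => rw [mul_zero]; exact Submodule.zero_mem _
  | add x y hx hy ihx ihy => rw [mul_add]; exact Submodule.add_mem _ ihx ihy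
  | smul a x hx ihx => rw [mul_smul_comm]; exact Submodule.smul_mem _ _ ihx

lemma ι_mul_mem (b : Module.Basis K R M) (v : M) {p : ExteriorAlgebra R M}
    (hp : p ∈ sortedSpan b) : ExteriorAlgebra.ι R v * p ∈ sortedSpan b := by
  rw [← b.sum_repr v, map_sum, Finset.sum_mul]
  refine Submodule.sum_mem _ fun i _ => ?_
  rw [map_smul, smul_mul_assoc]
  exact Submodule.smul_mem _ _ (ι_basis_mul_mem b i hp)

lemma mul_mem_sortedSpan (b : Module.Basis K R M) (x : ExteriorAlgebra R M) :
    ∀ p ∈ sortedSpan b, x * p ∈ sortedSpan b := by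
  induction x using CliffordAlgebra.induction with
  | algebraMap r =>
    intro p hp
    rw [← Algebra.smul_def]
    exact Submodule.smul_mem _ _ hp
  | ι v => intro p hp; exact ι_mul_mem b v hp
  | mul a c iha ihc => intro p hp; rw [mul_assoc]; exact iha _ (ihc _ hp)
  | add a c iha ihc =>
    intro p hp
    rw [add_mul]
    exact Submodule.add_mem _ (iha _ hp) (ihc _ hp)

lemma sortedSpan_eq_top (b : Module.Basis K R M) : sortedSpan b = ⊤ := by
  refine eq_top_iff.2 fun x _ => ?_
  simpa using mul_mem_sortedSpan b x _ (wl_mem_sortedSpan b (List.isChain_nil))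



lemma smul_cancel_of_basis [IsDomain R] (b : Module.Basis K R M) {c : R} (hc : c ≠ 0)
    {x : ExteriorAlgebra R M} (h : c • x = 0) : x = 0 := by
  classical
  have hx : x ∈ sortedSpan b := by rw [sortedSpan_eq_top]; trivial
  rw [sortedSpan] at hx
  obtain ⟨a, ha⟩ := Finsupp.mem_span_range_iff_exists_finsupp.1 hx
  have key : ∀ m₀ : {l : List K // l.IsChain (· < ·)}, a m₀ = 0 := by
    intro m₀
    set φ : ExteriorAlgebra R M →ₗ[R] R :=
      (ExteriorAlgebra.algebraMapInv (R := R) (M := M)).toLinearMap.comp (D b m₀.1) with hφ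
    have hφwl : ∀ m : {l : List K // l.IsChain (· < ·)},
        φ (wl b m.1) = if m = m₀ then (1 : R) else 0 := by
      intro m
      have := orth b m₀.1 m.1 m₀.2 m.2
      rw [hφ, LinearMap.comp_apply, AlgHom.toLinearMap_apply, this]
      by_cases hmm : m = m₀
      · rw [if_pos hmm, if_pos (by rw [hmm])]
      · rw [if_neg hmm, if_neg (fun hh => hmm (Subtype.ext hh.symm))]
    have hφx : φ x = a m₀ := by
      rw [← ha, map_finsuppSum]
      rw [show (fun (m : {l : List K // l.IsChain (· < ·)}) (r : R) => φ (r • wl b m.1))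
          = fun m r => if m = m₀ then r else 0 by
        funext m r
        rw [map_smul, hφwl m]
        by_cases hmm : m = m₀
        · rw [if_pos hmm, if_pos hmm, smul_eq_mul, mul_one]
        · rw [if_neg hmm, if_neg hmm, smul_eq_mul, mul_zero]]
      exact Finsupp.sum_ite_self_eq' a m₀
    have h0 : c * a m₀ = 0 := by
      rw [← hφx, ← smul_eq_mul, ← map_smul, h, map_zero]
    rcases mul_eq_zero.1 h0 with h' | h'
    · exact absurd h' hc
    · exact h'
  have : a = 0 := Finsupp.ext key
  rw [← ha, this, Finsupp.sum_zero_index]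

lemma smul_cancel {R : Type*} [CommRing R] [IsDomain R] {M : Type*} [AddCommGroup M]
    [Module R M] [Module.Free R M] [Module.Finite R M] {c : R} (hc : c ≠ 0)
    {x : ExteriorAlgebra R M} (h : c • x = 0) : x = 0 :=
  smul_cancel_of_basis ((Module.Free.chooseBasis R M).reindex
    (Fintype.equivFin (Module.Free.ChooseBasisIndex R M))) hc h


lemma mem_ptsmul_iff {R : Type*} [CommRing R] {X : Type*} [AddCommGroup X] [Module R X]
    {c : R} {W : Submodule R X} {x : X} :
    x ∈ c • W ↔ ∃ w ∈ W, c • w = x := by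
  rw [← SetLike.mem_coe, Submodule.coe_pointwise_smul]
  exact Set.mem_smul_set


variable {R : Type*} [CommRing R] {M : Type*} [AddCommGroup M] [Module R M]

lemma ιMulti_snoc (n : ℕ) (v : Fin n → M) (w : M) :
    ExteriorAlgebra.ιMulti R (n + 1) (Fin.snoc v w) =
      ExteriorAlgebra.ιMulti R n v * ExteriorAlgebra.ι R w := by
  rw [ExteriorAlgebra.ιMulti_apply, ExteriorAlgebra.ιMulti_apply, List.ofFn_succ',
    List.concat_eq_append, List.prod_append, List.prod_cons, List.prod_nil, mul_one]
  congr 1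
  · congr 1
    simp only [Fin.snoc_castSucc]
  · rw [Fin.snoc_last]

lemma map_pow_eq (N : Submodule R M) (n : ℕ) :
    (Submodule.map (ExteriorAlgebra.ι R) N) ^ n =
      Submodule.span R ((ExteriorAlgebra.ιMulti R n) '' {v : Fin n → M | ∀ p, v p ∈ N}) := by
  induction n with
  | zero =>
    rw [pow_zero]
    have himg : (ExteriorAlgebra.ιMulti R 0 (M := M)) '' {v : Fin 0 → M | ∀ p, v p ∈ N}
        = {1} := by
      apply Set.eq_singleton_iff_unique_mem.2
      constructor
      · exact ⟨fun p => p.elim0, fun p => p.elim0, ExteriorAlgebra.ιMulti_zero_apply _⟩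
      · rintro _ ⟨v, -, rfl⟩
        exact ExteriorAlgebra.ιMulti_zero_apply v
    rw [himg, Submodule.one_eq_span]
  | succ n ih =>
    apply le_antisymm
    · rw [pow_succ]
      refine Submodule.mul_le.2 fun x hx y hy => ?_
      rw [ih] at hx
      obtain ⟨w, hw, rfl⟩ := hy
      induction hx using Submodule.span_induction with
      | mem x hxm =>
        obtain ⟨v, hv, rfl⟩ := hxm
        rw [← ιMulti_snoc]
        apply Submodule.subset_span
        refine ⟨Fin.snoc v w, fun p => ?_, rfl⟩
        refine Fin.lastCases ?_ ?_ p
        · rw [Fin.snoc_last]; exact hw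
        · intro q
          rw [Fin.snoc_castSucc]
          exact hv q
      | zero => rw [zero_mul]; exact Submodule.zero_mem _
      | add a c ha hc iha ihc => rw [add_mul]; exact Submodule.add_mem _ iha ihc
      | smul r a ha iha => rw [smul_mul_assoc]; exact Submodule.smul_mem _ _ iha
    · refine Submodule.span_le.2 ?_
      rintro _ ⟨v, hv, rfl⟩
      rw [ExteriorAlgebra.ιMulti_succ_apply, pow_succ']
      refine Submodule.mul_mem_mul ⟨v 0, hv 0, rfl⟩ ?_
      rw [ih]
      exact Submodule.subset_span ⟨Matrix.vecTail v, fun p => hv p.succ, rfl⟩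


end ExtDiv

namespace ExtDiv


lemma span_of_length {R : Type*} [Ring R] {P : Type*} [AddCommGroup P] [Module R P] {n : ℕ}
    (h : ModuleLengthEq R P n) : ∃ f : Fin n → P, Submodule.span R (Set.range f) = ⊤ := by
  obtain ⟨s, hh, hl, hn⟩ := h
  have key : ∀ k : ℕ, ∀ hk : k ≤ s.length,
      ∃ f : Fin k → P, s ⟨k, by omega⟩ ≤ Submodule.span R (Set.range f) := by
    intro k
    induction k with
    | zero =>
      intro _
      refine ⟨Fin.elim0, ?_⟩
      have : s ⟨0, by omega⟩ = s.head := rfl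
      rw [this, hh]
      exact bot_le
    | succ k ih =>
      intro hk
      obtain ⟨f, hf⟩ := ih (by omega)
      have hstep := s.step ⟨k, by omega⟩
      have hcov : s (Fin.castSucc ⟨k, by omega⟩) ⋖ s (Fin.succ ⟨k, by omega⟩) := hstep
      have hlt : s (Fin.castSucc ⟨k, by omega⟩) < s (Fin.succ ⟨k, by omega⟩) := hcov.lt
      obtain ⟨x, hxB, hxA⟩ := SetLike.exists_of_lt hlt
      have hsup : s (Fin.castSucc ⟨k, by omega⟩) ⊔ Submodule.span R {x}
          = s (Fin.succ ⟨k, by omega⟩) := by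
        have h1 : s (Fin.castSucc ⟨k, by omega⟩)
            < s (Fin.castSucc ⟨k, by omega⟩) ⊔ Submodule.span R {x} := by
          refine lt_of_le_of_ne le_sup_left fun he => hxA ?_
          rw [he]
          exact Submodule.mem_sup_right (Submodule.mem_span_singleton_self x)
        have h2 : s (Fin.castSucc ⟨k, by omega⟩) ⊔ Submodule.span R {x}
            ≤ s (Fin.succ ⟨k, by omega⟩) :=
          sup_le hlt.le (Submodule.span_le.2 (Set.singleton_subset_iff.2 hxB))
        rcases h2.lt_or_eq with h' | h'
        · exact absurd h' (hcov.2 h1)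
        · exact h'
      refine ⟨Fin.cons x f, ?_⟩
      have : s ⟨k + 1, by omega⟩ = s (Fin.succ ⟨k, by omega⟩) := by
        congr 1
      rw [this, ← hsup, Fin.range_cons, Submodule.span_insert]
      have : s (Fin.castSucc ⟨k, by omega⟩) = s ⟨k, by omega⟩ := by congr 1
      rw [this]
      exact sup_le (le_sup_of_le_right hf) le_sup_left
  obtain ⟨f, hf⟩ := key s.length le_rfl
  have : s ⟨s.length, by omega⟩ = s.last := rfl
  rw [this, hl] at hf
  refine ⟨f ∘ Fin.cast hn.symm, ?_⟩
  have hr : Set.range (Fin.cast hn.symm) = Set.univ :=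
    Set.eq_univ_of_forall fun p => ⟨⟨p.1, by omega⟩, by ext; simp⟩
  rw [Set.range_comp, hr, Set.image_univ]
  exact top_le_iff.1 hf

lemma exists_generators {R : Type*} [Ring R] {M : Type*} [AddCommGroup M] [Module R M]
    {N N' : Submodule R M} {n : ℕ}
    (h : ModuleLengthEq R (↥N ⧸ N'.comap N.subtype) n) :
    ∃ g : Fin n → M, (∀ t, g t ∈ N) ∧ N ≤ N' ⊔ Submodule.span R (Set.range g) := by
  obtain ⟨f, hf⟩ := span_of_length h
  choose y hy using fun t => Submodule.Quotient.mk_surjective (N'.comap N.subtype) (f t)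
  refine ⟨fun t => (y t : M), fun t => (y t).2, ?_⟩
  intro x hx
  have hxq : Submodule.Quotient.mk (p := N'.comap N.subtype) (⟨x, hx⟩ : N)
      ∈ Submodule.span R (Set.range f) := by rw [hf]; trivial
  rw [show f = fun t => Submodule.Quotient.mk (p := N'.comap N.subtype) (y t) from
    funext fun t => (hy t).symm] at hxq
  have hxq2 : Submodule.Quotient.mk (p := N'.comap N.subtype) (⟨x, hx⟩ : N)
      ∈ Submodule.map (N'.comap N.subtype).mkQ (Submodule.span R (Set.range y)) := by
    rw [Submodule.map_span, ← Set.range_comp]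
    exact hxq
  obtain ⟨z, hz, hzx⟩ := Submodule.mem_map.1 hxq2
  have hker : (⟨x, hx⟩ : N) - z ∈ N'.comap N.subtype := by
    rw [← Submodule.Quotient.eq]
    exact hzx.symm
  have h1 : x - (z : M) ∈ N' := hker
  have h2 : (z : M) ∈ Submodule.span R (Set.range fun t => (y t : M)) := by
    have : (z : M) ∈ Submodule.map N.subtype (Submodule.span R (Set.range y)) :=
      ⟨z, hz, rfl⟩
    rwa [Submodule.map_span, ← Set.range_comp] at this
  exact Submodule.mem_sup.2 ⟨x - z, h1, z, h2, by abel⟩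


end ExtDiv

/-- Let `R` be a DVR with uniformizer `π`, `M` a free `R`-module of finite
rank, `e ≥ 1`, and `Fil⁰ ⊆ ⋯ ⊆ Fil^e ⊆ M` a chain of submodules with `Fil⁰ ⊆ π^e·M`,
`π·Fil^i ⊆ Fil^{i-1}`, and `Fil^i/Fil^{i-1}` of length `dᵢ` for `1 ≤ i ≤ e`.  Then for
every `d ≥ 1` and `0 ≤ i ≤ e`, the image of the canonical map `⋀^d Fil^i → ⋀^d M`
(the submodule `(ι Fil^i)^d` of the exterior algebra) is contained in
`π^{e·d - ∑_{j=1}^{i} min(d, dⱼ)} · ⋀^d M`. -/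
theorem exteriorPower_filtration_divisibility
    {R : Type*} [CommRing R] [IsDomain R] [IsDiscreteValuationRing R]
    (π : R) (hπ : Irreducible π)
    {M : Type*} [AddCommGroup M] [Module R M] [Module.Free R M] [Module.Finite R M]
    (e : ℕ) (he : 1 ≤ e) (d : ℕ → ℕ) (Fil : ℕ → Submodule R M)
    (hFil0 : Fil 0 ≤ π ^ e • (⊤ : Submodule R M))
    (hmono : ∀ i, 1 ≤ i → i ≤ e → Fil (i - 1) ≤ Fil i)
    (hsm : ∀ i, 1 ≤ i → i ≤ e → π • Fil i ≤ Fil (i - 1))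
    (hlen : ∀ i, 1 ≤ i → i ≤ e →
      ModuleLengthEq R (↥(Fil i) ⧸ (Fil (i - 1)).comap (Fil i).subtype) (d i))
    (dd : ℕ) (hdd : 1 ≤ dd) (i : ℕ) (hi : i ≤ e) :
    (Submodule.map (ExteriorAlgebra.ι R) (Fil i)) ^ dd ≤
      π ^ (e * dd - ∑ j ∈ Finset.Icc 1 i, min dd (d j)) •
        (⋀[R]^dd M : Submodule R (ExteriorAlgebra R M)) := by
  classical
  revert hi
  induction i with
  | zero =>
    intro _
    rw [ExtDiv.map_pow_eq, Finset.Icc_eq_empty (by omega), Finset.sum_empty, Nat.sub_zero]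
    refine Submodule.span_le.2 ?_
    rintro _ ⟨v, hv, rfl⟩
    rw [SetLike.mem_coe]
    choose u hu using fun p => ExtDiv.mem_ptsmul_iff.1 (hFil0 (hv p))
    rw [show v = fun p => π ^ e • u p from funext fun p => ((hu p).2).symm]
    have hml : ExteriorAlgebra.ιMulti R dd (fun p => π ^ e • u p)
        = (∏ _p : Fin dd, π ^ e) • ExteriorAlgebra.ιMulti R dd u :=
      MultilinearMap.map_smul_univ (ExteriorAlgebra.ιMulti R dd).toMultilinearMap _ u
    rw [hml, Finset.prod_const, Finset.card_univ, Fintype.card_fin, ← pow_mul]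
    exact Submodule.smul_mem_pointwise_smul _ _ _ (ExteriorAlgebra.ιMulti_range R dd ⟨u, rfl⟩)
  | succ i ih =>
    intro hi
    have hie : i ≤ e := by omega
    have IH := ih hie
    set m := d (i + 1) with hm
    set k₀ := min dd m with hk₀
    set s := ∑ j ∈ Finset.Icc 1 i, min dd (d j) with hs
    have hlen' := hlen (i + 1) (by omega) hi
    obtain ⟨g, hg, hspan⟩ := ExtDiv.exists_generators hlen'
    have hsm' : π • Fil (i + 1) ≤ Fil i := hsm (i + 1) (by omega) hi
    have hsum : ∑ j ∈ Finset.Icc 1 (i + 1), min dd (d j) = s + k₀ :=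
      Finset.sum_Icc_succ_top (by omega) _
    have hbound : s + k₀ ≤ e * dd := by
      have h1 : ∑ j ∈ Finset.Icc 1 (i + 1), min dd (d j)
          ≤ ∑ _j ∈ Finset.Icc 1 (i + 1), dd :=
        Finset.sum_le_sum fun j _ => min_le_left _ _
      rw [Finset.sum_const, Nat.card_Icc, smul_eq_mul] at h1
      have h2 : (i + 1 + 1 - 1) * dd ≤ e * dd := Nat.mul_le_mul_right dd (by omega)
      omega
    -- Key claim
    have key : ∀ v : Fin dd → M, (∀ p, v p ∈ Fil (i + 1)) →
        π ^ k₀ • ExteriorAlgebra.ιMulti R dd v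
          ∈ (Submodule.map (ExteriorAlgebra.ι R) (Fil i)) ^ dd := by
      intro v hv
      choose a ha z hz hsum' using fun p => Submodule.mem_sup.1 (hspan (hv p))
      choose cc hcc using fun p => (Submodule.mem_span_range_iff_exists_fun R).1 (hz p)
      set u : Fin dd → Option (Fin m) → M :=
        fun p o => o.elim (a p) (fun t => cc p t • g t) with hu
      have hvu : v = fun p => ∑ o : Option (Fin m), u p o := by
        funext p
        rw [Fintype.sum_option]
        show v p = a p + ∑ t, cc p t • g t
        rw [hcc p, ← hsum' p]
      rw [hvu]
      have hexp : ExteriorAlgebra.ιMulti R dd (fun p => ∑ o : Option (Fin m), u p o)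
          = ∑ τ : Fin dd → Option (Fin m),
              ExteriorAlgebra.ιMulti R dd (fun p => u p (τ p)) :=
        MultilinearMap.map_sum (ExteriorAlgebra.ιMulti R dd).toMultilinearMap u
      rw [hexp, Finset.smul_sum]
      refine Submodule.sum_mem _ fun τ _ => ?_
      set e' : Fin dd → R := fun p => (τ p).elim 1 (fun t => cc p t) with he'
      set wb : Fin dd → M := fun p => (τ p).elim (a p) (fun t => g t) with hwb
      have hsplit : (fun p => u p (τ p)) = fun p => e' p • wb p := by
        funext p
        cases hτ : τ p with
        | none => simp [hu, he', hwb, hτ]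
        | some t => simp [hu, he', hwb, hτ]
      rw [hsplit]
      have h1 : ExteriorAlgebra.ιMulti R dd (fun p => e' p • wb p)
          = (∏ p, e' p) • ExteriorAlgebra.ιMulti R dd wb :=
        MultilinearMap.map_smul_univ (ExteriorAlgebra.ιMulti R dd).toMultilinearMap e' wb
      rw [h1]
      by_cases hinj : ∀ p q t, τ p = some t → τ q = some t → p = q
      · set S : Finset (Fin dd) := Finset.univ.filter (fun p => (τ p).isSome) with hS
        have hcard : S.card ≤ k₀ := by
          rw [hk₀]
          refine le_min ?_ ?_
          · calc S.card ≤ Finset.univ.card := Finset.card_le_univ S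
              _ = dd := by rw [Finset.card_univ, Fintype.card_fin]
          · have hfe : Finset.univ.filter (fun o : Option (Fin m) => o.isSome)
                = Finset.univ.image some := by
              ext o
              cases o <;> simp
            have h3 : S.card
                ≤ (Finset.univ.filter (fun o : Option (Fin m) => o.isSome)).card := by
              refine Finset.card_le_card_of_injOn τ ?_ ?_
              · intro p hp
                rw [hS] at hp
                simp only [Finset.coe_filter, Finset.mem_coe, Finset.mem_filter, Finset.mem_univ,
                  true_and, Set.mem_setOf_eq] at hp ⊢
                exact hp
              · intro p hp q hq he
                rw [hS] at hp
                simp only [Finset.coe_filter, Finset.mem_univ, true_and,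
                  Set.mem_setOf_eq] at hp
                obtain ⟨t, ht⟩ := Option.isSome_iff_exists.1 hp
                exact hinj p q t ht (he ▸ ht)
            rw [hfe, Finset.card_image_of_injective _ (Option.some_injective _),
              Finset.card_univ, Fintype.card_fin] at h3
            exact h3
        have hππ : π ^ k₀ = π ^ (k₀ - S.card) * π ^ S.card := by
          rw [← pow_add]
          congr 1
          omega
        set w' : Fin dd → M := fun p => (if p ∈ S then π else 1) • wb p with hw'
        have h2 : ExteriorAlgebra.ιMulti R dd w'
            = π ^ S.card • ExteriorAlgebra.ιMulti R dd wb := by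
          have h4 : ExteriorAlgebra.ιMulti R dd (fun p => (if p ∈ S then π else 1) • wb p)
              = (∏ p, if p ∈ S then π else 1) • ExteriorAlgebra.ιMulti R dd wb :=
            MultilinearMap.map_smul_univ (ExteriorAlgebra.ιMulti R dd).toMultilinearMap _ wb
          rw [hw', h4, Finset.prod_ite_mem, Finset.univ_inter, Finset.prod_const]
        have hw'mem : ∀ p, w' p ∈ Fil i := by
          intro p
          by_cases hp : p ∈ S
          · have hps : (τ p).isSome := by
              rw [hS] at hp
              simpa using hp
            obtain ⟨t, ht⟩ := Option.isSome_iff_exists.1 hps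
            have hwbp : wb p = g t := by simp [hwb, ht]
            rw [hw']
            simp only [if_pos hp, hwbp]
            exact hsm' (Submodule.smul_mem_pointwise_smul _ _ _ (hg t))
          · have hps : τ p = none := by
              rw [hS] at hp
              simpa [Option.not_isSome_iff_eq_none] using hp
            have hwbp : wb p = a p := by simp [hwb, hps]
            rw [hw']
            simp only [if_neg hp, one_smul, hwbp]
            exact ha p
        rw [smul_comm (π ^ k₀), hππ, mul_smul, ← h2]
        refine Submodule.smul_mem _ _ (Submodule.smul_mem _ _ ?_)
        rw [ExtDiv.map_pow_eq]
        exact Submodule.subset_span ⟨w', hw'mem, rfl⟩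
      · push_neg at hinj
        obtain ⟨p, q, t, hp, hq, hpq⟩ := hinj
        have h0 : ExteriorAlgebra.ιMulti R dd wb = 0 :=
          AlternatingMap.map_eq_zero_of_eq _ wb (by simp [hwb, hp, hq]) hpq
        rw [h0, smul_zero, smul_zero]
        exact Submodule.zero_mem _
    -- conclude
    rw [ExtDiv.map_pow_eq, hsum]
    refine Submodule.span_le.2 ?_
    rintro _ ⟨v, hv, rfl⟩
    rw [SetLike.mem_coe]
    obtain ⟨w, hw, hweq⟩ := ExtDiv.mem_ptsmul_iff.1 (IH (key v hv))
    have harith : e * dd - s = k₀ + (e * dd - (s + k₀)) := by omega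
    have heq2 : π ^ k₀ • ExteriorAlgebra.ιMulti R dd v
        = π ^ k₀ • (π ^ (e * dd - (s + k₀)) • w) := by
      rw [← hweq, harith, pow_add, mul_smul]
    have hx0 : ExteriorAlgebra.ιMulti R dd v - π ^ (e * dd - (s + k₀)) • w = 0 :=
      ExtDiv.smul_cancel (pow_ne_zero k₀ hπ.ne_zero)
        (by rw [smul_sub, heq2, sub_self])
    rw [sub_eq_zero] at hx0
    rw [hx0]
    exact Submodule.smul_mem_pointwise_smul _ _ _ hw
end

section
/- Let R be a discrete valuation ring with uniformizer π, let M be a free R-module of finite rank, let e ≥ 1 be an integer, and let Fil⁰ ⊆ Fil¹ ⊆ ⋯ ⊆ Fil^e ⊆ M be a chain of submodules such that Fil⁰ ⊆ π^e·M, π·Fil^i ⊆ Fil^{i−1} for 1 ≤ i ≤ e, and the R-module Fil^i/Fil^{i−1} has length d_i for 1 ≤ i ≤ e. Then for every integer d ≥ 1, the image of the canonical map ⋀^d Fil^e → ⋀^d M is contained in π^{k_d} · ⋀^d M, where k_d = ∑_{j=1}^{e} max(d − d_j, 0). -/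
open Pointwise

namespace ExtTF
variable {R : Type*} [CommRing R] {M : Type*} [AddCommGroup M] [Module R M]
variable {κ : Type*} [LinearOrder κ]

noncomputable def mon (b : κ → M) (l : List κ) : ExteriorAlgebra R M :=
  (l.map fun i => ExteriorAlgebra.ι R (b i)).prod

lemma mon_nil (b : κ → M) : mon (R := R) b [] = 1 := rfl

lemma mon_cons (b : κ → M) (i : κ) (t : List κ) :
    mon (R := R) b (i :: t) = ExteriorAlgebra.ι R (b i) * mon b t := by
  simp [mon]

/-- The set of monomials indexed by strictly sorted lists. -/
def SM (b : κ → M) : Set (ExteriorAlgebra R M) :=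
  {z | ∃ l : List κ, l.Pairwise (· < ·) ∧ mon b l = z}

lemma ι_mul_mon_mem (b : κ → M) :
    ∀ (l : List κ), l.Pairwise (· < ·) → ∀ i : κ,
      ExteriorAlgebra.ι R (b i) * mon b l ∈
        Submodule.span R {z | ∃ l' : List κ, l'.Pairwise (· < ·) ∧
          (∀ j ∈ l', j = i ∨ j ∈ l) ∧ mon b l' = z} := by
  intro l
  induction l with
  | nil =>
    intro _ i
    refine Submodule.subset_span ⟨[i], List.pairwise_singleton _ i, ?_, ?_⟩
    · simp
    · rw [mon_cons, mon_nil, mul_one]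
  | cons j t ih =>
    intro hs i
    have hst : t.Pairwise (· < ·) := hs.of_cons
    have hjt : ∀ x ∈ t, j < x := fun x hx => (List.pairwise_cons.mp hs).1 x hx
    rcases lt_trichotomy i j with hij | hij | hij
    · refine Submodule.subset_span ⟨i :: j :: t, ?_, ?_, ?_⟩
      · exact List.pairwise_cons.mpr ⟨fun x hx => by
          rcases List.mem_cons.mp hx with h | h
          · exact h ▸ hij
          · exact hij.trans (hjt x h), hs⟩
      · intro x hx
        rcases List.mem_cons.mp hx with h | h
        · exact Or.inl h
        · exact Or.inr h
      · rw [mon_cons]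
    · subst hij
      rw [mon_cons, ← mul_assoc, ExteriorAlgebra.ι_sq_zero, zero_mul]
      exact Submodule.zero_mem _
    · -- j < i
      have key : ExteriorAlgebra.ι R (b i) * mon b (j :: t)
          = -(ExteriorAlgebra.ι R (b j) * (ExteriorAlgebra.ι R (b i) * mon b t)) := by
        have h0 : ((ExteriorAlgebra.ι R) (b i) * (ExteriorAlgebra.ι R) (b j)) * mon b t
            + ((ExteriorAlgebra.ι R) (b j) * (ExteriorAlgebra.ι R) (b i)) * mon b t = 0 := by
          rw [← add_mul, ExteriorAlgebra.ι_add_mul_swap, zero_mul]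
        rw [mon_cons, ← mul_assoc, ← mul_assoc]
        exact eq_neg_of_add_eq_zero_left h0
      rw [key]
      refine Submodule.neg_mem _ ?_
      have hmem := ih hst i
      -- multiply by ι (b j) stays in the right span
      have hmap : ∀ z ∈ Submodule.span R {z | ∃ l' : List κ, l'.Pairwise (· < ·) ∧
            (∀ x ∈ l', x = i ∨ x ∈ t) ∧ mon b l' = z},
          ExteriorAlgebra.ι R (b j) * z ∈
            Submodule.span R {z | ∃ l' : List κ, l'.Pairwise (· < ·) ∧
              (∀ x ∈ l', x = i ∨ x ∈ j :: t) ∧ mon b l' = z} := by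
        intro z hz
        induction hz using Submodule.span_induction with
        | mem w hw =>
          obtain ⟨l', hl's, hl'm, rfl⟩ := hw
          refine Submodule.subset_span ⟨j :: l', ?_, ?_, ?_⟩
          · refine List.pairwise_cons.mpr ⟨fun x hx => ?_, hl's⟩
            rcases hl'm x hx with h | h
            · exact h ▸ hij
            · exact hjt x h
          · intro x hx
            rcases List.mem_cons.mp hx with h | h
            · exact Or.inr (h ▸ (List.mem_cons_self (a := j) (l := t)))
            · rcases hl'm x h with h' | h'
              · exact Or.inl h'
              · exact Or.inr (List.mem_cons_of_mem j h')
          · rw [mon_cons]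
        | zero => simpa using Submodule.zero_mem _
        | add u v _ _ hu hv => rw [mul_add]; exact Submodule.add_mem _ hu hv
        | smul c u _ hu => rw [mul_smul_comm]; exact Submodule.smul_mem _ _ hu
      exact hmap _ hmem

lemma span_SM_le (b : κ → M) {l : List κ} (i : κ) :
    Submodule.span R {z | ∃ l' : List κ, l'.Pairwise (· < ·) ∧
      (∀ j ∈ l', j = i ∨ j ∈ l) ∧ mon b l' = z} ≤ Submodule.span R (SM (R := R) b) :=
  Submodule.span_mono (fun _ ⟨l', h1, _, h3⟩ => ⟨l', h1, h3⟩)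

lemma ι_mul_mem_span (b : κ → M) (i : κ) {z : ExteriorAlgebra R M}
    (hz : z ∈ Submodule.span R (SM b)) :
    ExteriorAlgebra.ι R (b i) * z ∈ Submodule.span R (SM b) := by
  induction hz using Submodule.span_induction with
  | mem w hw =>
    obtain ⟨l, hl, rfl⟩ := hw
    exact span_SM_le b i (ι_mul_mon_mem b l hl i)
  | zero => rw [mul_zero]; exact Submodule.zero_mem _
  | add u v _ _ hu hv => rw [mul_add]; exact Submodule.add_mem _ hu hv
  | smul c u _ hu => rw [mul_smul_comm]; exact Submodule.smul_mem _ _ hu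

lemma mon_mem_span (b : κ → M) (l : List κ) :
    mon b l ∈ Submodule.span R (SM (R := R) b) := by
  induction l with
  | nil => exact Submodule.subset_span ⟨[], List.Pairwise.nil, rfl⟩
  | cons i t ih => rw [mon_cons]; exact ι_mul_mem_span b i ih

lemma mul_mem_span (b : κ → M) {z w : ExteriorAlgebra R M}
    (hz : z ∈ Submodule.span R (SM b)) (hw : w ∈ Submodule.span R (SM b)) :
    z * w ∈ Submodule.span R (SM b) := by
  induction hz using Submodule.span_induction with
  | mem u hu =>
    obtain ⟨l, -, rfl⟩ := hu
    induction l generalizing w with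
    | nil => rwa [mon_nil, one_mul]
    | cons i t ih =>
      rw [mon_cons, mul_assoc]
      exact ι_mul_mem_span b i (ih hw)
  | zero => rw [zero_mul]; exact Submodule.zero_mem _
  | add u v _ _ hu hv => rw [add_mul]; exact Submodule.add_mem _ hu hv
  | smul c u _ hu => rw [smul_mul_assoc]; exact Submodule.smul_mem _ _ hu

lemma span_SM_eq_top [Fintype κ] (b : Module.Basis κ R M) :
    Submodule.span R (SM (R := R) (fun i => b i)) = ⊤ := by
  rw [eq_top_iff]
  intro z _
  induction z using ExteriorAlgebra.induction with
  | algebraMap r =>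
    have : algebraMap R (ExteriorAlgebra R M) r = r • mon (fun i => b i) [] := by
      rw [mon_nil, Algebra.algebraMap_eq_smul_one]
    rw [this]
    exact Submodule.smul_mem _ _ (mon_mem_span _ [])
  | ι m =>
    have hm : m = ∑ i : κ, b.repr m i • b i := (b.sum_repr m).symm
    rw [hm, map_sum]
    refine Submodule.sum_mem _ fun i _ => ?_
    rw [map_smul]
    refine Submodule.smul_mem _ _ ?_
    have : ExteriorAlgebra.ι R (b i) = mon (fun i => b i) [i] := by
      rw [mon_cons, mon_nil, mul_one]
    rw [this]
    exact mon_mem_span _ [i]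
  | mul x y hx hy => exact mul_mem_span _ (hx trivial) (hy trivial)
  | add x y hx hy => exact Submodule.add_mem _ (hx trivial) (hy trivial)

lemma algebraMapInv_ι_apply (m : M) :
    ExteriorAlgebra.algebraMapInv (ExteriorAlgebra.ι R m) = (0 : R) := by
  simp [ExteriorAlgebra.algebraMapInv, ExteriorAlgebra.lift_ι_apply]

/-- Iterated contraction followed by the projection to scalars. -/
noncomputable def lam (f : κ → Module.Dual R M) : List κ → (ExteriorAlgebra R M →ₗ[R] R)
  | [] => ExteriorAlgebra.algebraMapInv.toLinearMap
  | i :: t => (lam f t) ∘ₗ (CliffordAlgebra.contractLeft (Q := (0 : QuadraticForm R M)) (f i))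

lemma contract_mon_not_mem (b : κ → M) (f : κ → Module.Dual R M)
    (hf : ∀ i j, f i (b j) = if i = j then 1 else 0) (i : κ) :
    ∀ l : List κ, i ∉ l →
      CliffordAlgebra.contractLeft (Q := (0 : QuadraticForm R M)) (f i) (mon b l) = 0 := by
  intro l
  induction l with
  | nil => intro _; rw [mon_nil]; exact CliffordAlgebra.contractLeft_one (Q := (0 : QuadraticForm R M)) (f i)
  | cons j t ih =>
    intro hi
    have hij : i ≠ j := fun h => hi (by rw [h]; exact List.mem_cons_self)
    rw [mon_cons, CliffordAlgebra.contractLeft_ι_mul, ih (fun h => hi (List.mem_cons_of_mem j h)),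
      mul_zero, sub_zero, hf i j, if_neg hij, zero_smul]

lemma contract_mon_mem (b : κ → M) (f : κ → Module.Dual R M)
    (hf : ∀ i j, f i (b j) = if i = j then 1 else 0) (i : κ) :
    ∀ l : List κ, l.Pairwise (· < ·) → i ∈ l →
      ∃ s : R, (s = 1 ∨ s = -1) ∧
        CliffordAlgebra.contractLeft (Q := (0 : QuadraticForm R M)) (f i) (mon b l)
          = s • mon b (l.erase i) := by
  intro l
  induction l with
  | nil => intro _ h; exact absurd h List.not_mem_nil
  | cons j t ih =>
    intro hs hi
    have hst : t.Pairwise (· < ·) := hs.of_cons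
    have hjt : ∀ x ∈ t, j < x := fun x hx => (List.pairwise_cons.mp hs).1 x hx
    by_cases hij : i = j
    · subst hij
      have hit : i ∉ t := fun h => lt_irrefl i (hjt i h)
      refine ⟨1, Or.inl rfl, ?_⟩
      rw [mon_cons, CliffordAlgebra.contractLeft_ι_mul, contract_mon_not_mem b f hf i t hit,
        mul_zero, sub_zero, hf i i, if_pos rfl, List.erase_cons_head, one_smul]
    · have hit : i ∈ t := by
        rcases List.mem_cons.mp hi with h | h
        · exact absurd h hij
        · exact h
      obtain ⟨s, hs1, hs2⟩ := ih hst hit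
      refine ⟨-s, ?_, ?_⟩
      · rcases hs1 with h | h
        · exact Or.inr (by rw [h])
        · exact Or.inl (by rw [h, neg_neg])
      · rw [mon_cons, CliffordAlgebra.contractLeft_ι_mul, hs2, hf i j, if_neg hij, zero_smul,
          zero_sub, List.erase_cons_tail (by simp [Ne.symm hij]), mon_cons, mul_smul_comm,
          neg_smul]

lemma sorted_eq_cons_erase {l : List κ} {i : κ} (hs : l.Pairwise (· < ·)) (hi : i ∈ l)
    (hlt : ∀ x ∈ l.erase i, i < x) : l = i :: l.erase i := by
  cases l with
  | nil => exact absurd hi List.not_mem_nil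
  | cons j t =>
    by_cases hj : j = i
    · subst hj; rw [List.erase_cons_head]
    · exfalso
      have hjt : ∀ x ∈ t, j < x := fun x hx => (List.pairwise_cons.mp hs).1 x hx
      have herase : (j :: t).erase i = j :: t.erase i :=
        List.erase_cons_tail (by simp [hj])
      have hij : i < j := by
        have := hlt j (by rw [herase]; exact List.mem_cons_self)
        exact this
      have hit : i ∈ t := by
        rcases List.mem_cons.mp hi with h | h
        · exact absurd h.symm hj
        · exact h
      exact lt_asymm hij (hjt i hit)

lemma lam_mon (b : κ → M) (f : κ → Module.Dual R M)
    (hf : ∀ i j, f i (b j) = if i = j then 1 else 0) :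
    ∀ l l' : List κ, l.Pairwise (· < ·) → l'.Pairwise (· < ·) →
      (l = l' → ∃ s : R, (s = 1 ∨ s = -1) ∧ lam f l (mon b l') = s) ∧
      (l ≠ l' → lam f l (mon b l') = 0) := by
  intro l
  induction l with
  | nil =>
    intro l' _ hl'
    constructor
    · rintro rfl
      exact ⟨1, Or.inl rfl, by simp [lam, mon_nil]⟩
    · intro hne
      cases l' with
      | nil => exact absurd rfl hne
      | cons j t =>
        show ExteriorAlgebra.algebraMapInv _ = (0 : R)
        rw [mon_cons, map_mul, algebraMapInv_ι_apply, zero_mul]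
  | cons i t ih =>
    intro l' hs hl'
    have hst : t.Pairwise (· < ·) := hs.of_cons
    have hit : ∀ x ∈ t, i < x := fun x hx => (List.pairwise_cons.mp hs).1 x hx
    constructor
    · rintro rfl
      have hint : i ∉ t := fun h => lt_irrefl i (hit i h)
      have : lam f (i :: t) (mon b (i :: t))
          = lam f t (CliffordAlgebra.contractLeft (Q := (0 : QuadraticForm R M)) (f i)
              (mon b (i :: t))) := rfl
      obtain ⟨s, hs1, hs2⟩ := contract_mon_mem b f hf i (i :: t) hs List.mem_cons_self
      rw [List.erase_cons_head] at hs2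
      obtain ⟨s', hs1', hs2'⟩ := (ih t hst hst).1 rfl
      refine ⟨s * s', ?_, ?_⟩
      · rcases hs1 with h | h <;> rcases hs1' with h' | h' <;> simp [h, h']
      · rw [this, hs2, map_smul, hs2', smul_eq_mul]
    · intro hne
      by_cases hi : i ∈ l'
      · obtain ⟨s, hs1, hs2⟩ := contract_mon_mem b f hf i l' hl' hi
        have herased : (l'.erase i).Pairwise (· < ·) := hl'.sublist (List.erase_sublist)
        have hne' : t ≠ l'.erase i := by
          intro h
          subst h
          exact hne (sorted_eq_cons_erase hl' hi (fun x hx => hit x hx)).symm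
        have : lam f (i :: t) (mon b l')
            = lam f t (CliffordAlgebra.contractLeft (Q := (0 : QuadraticForm R M)) (f i)
                (mon b l')) := rfl
        rw [this, hs2, map_smul, (ih (l'.erase i) hst herased).2 hne', smul_zero]
      · have : lam f (i :: t) (mon b l')
            = lam f t (CliffordAlgebra.contractLeft (Q := (0 : QuadraticForm R M)) (f i)
                (mon b l')) := rfl
        rw [this, contract_mon_not_mem b f hf i l' hi, map_zero]

theorem smul_eq_zero_of_basis [IsDomain R] [Fintype κ] (b : Module.Basis κ R M)
    {c : R} {z : ExteriorAlgebra R M} (h : c • z = 0) : c = 0 ∨ z = 0 := by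
  by_cases hc : c = 0
  · exact Or.inl hc
  refine Or.inr ?_
  set bb : κ → M := fun i => b i with hbb
  have hf : ∀ i j : κ, b.coord i (bb j) = if i = j then 1 else 0 := by
    intro i j
    by_cases hij : i = j
    · subst hij; simp [hbb]
    · simp only [hbb, Module.Basis.coord_apply, Module.Basis.repr_self, Finsupp.single_apply]
      rw [if_neg (fun hh => hij hh.symm), if_neg hij]
  have hz : z ∈ Submodule.span R (SM (R := R) bb) := by
    rw [span_SM_eq_top b]; trivial
  rw [Submodule.mem_span_set] at hz
  obtain ⟨co, hsupp, hsum⟩ := hz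
  have key : ∀ x ∈ co.support, co x = 0 := by
    intro x₀ hx₀
    obtain ⟨l₀, hl₀s, hl₀⟩ := hsupp hx₀
    have h0 : lam (fun i => b.coord i) l₀ (c • z) = 0 := by rw [h, map_zero]
    rw [map_smul, smul_eq_mul] at h0
    have hlz : lam (fun i => b.coord i) l₀ z = 0 := by
      rcases mul_eq_zero.mp h0 with h' | h'
      · exact absurd h' hc
      · exact h'
    rw [← hsum, map_finsuppSum] at hlz
    simp only [map_smul] at hlz
    have hterm : ∀ x ∈ co.support, x ≠ x₀ →
        co x • lam (fun i => b.coord i) l₀ x = 0 := by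
      intro x hx hne
      obtain ⟨l, hls, hl⟩ := hsupp hx
      have hlne : l₀ ≠ l := by
        intro hh
        exact hne (by rw [← hl, ← hl₀, hh])
      rw [← hl, (lam_mon bb (fun i => b.coord i) hf l₀ l hl₀s hls).2 hlne, smul_zero]
    obtain ⟨s, hs1, hs2⟩ := (lam_mon bb (fun i => b.coord i) hf l₀ l₀ hl₀s hl₀s).1 rfl
    have : co.sum (fun a r => r • lam (fun i => b.coord i) l₀ a) = co x₀ * s := by
      rw [Finsupp.sum]
      rw [Finset.sum_eq_single_of_mem x₀ hx₀ hterm, ← hl₀, hs2, smul_eq_mul]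
    rw [this] at hlz
    rcases hs1 with h' | h'
    · rwa [h', mul_one] at hlz
    · rw [h'] at hlz
      have := mul_eq_zero.mp hlz
      rcases this with h'' | h''
      · exact h''
      · exact absurd h'' (by norm_num)
  have hco : co = 0 := by
    ext x
    by_cases hx : x ∈ co.support
    · exact key x hx
    · exact Finsupp.notMem_support_iff.mp hx
  rw [← hsum, hco, Finsupp.sum_zero_index]

theorem exteriorAlgebra_noZeroSMulDivisors (R M : Type*) [CommRing R] [IsDomain R]
    [AddCommGroup M] [Module R M] [Module.Free R M] [Module.Finite R M] :
    NoZeroSMulDivisors R (ExteriorAlgebra R M) :=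
  ⟨fun h => smul_eq_zero_of_basis (Module.finBasis R M) h⟩

end ExtTF

theorem exists_unit_relation {R : Type*} [CommRing R] [IsDomain R] [IsDiscreteValuationRing R]
    {P : Type*} [AddCommGroup P] [Module R P] [Module.Finite R P]
    (π : R) (hπ : Irreducible π) (htor : Module.IsTorsionBy R P π)
    {n : ℕ} (hlen : ModuleLengthEq R P n) {m : ℕ} (hm : n < m) (q : Fin m → P) :
    ∃ c : Fin m → R, (∃ l, IsUnit (c l)) ∧ ∑ l, c l • q l = 0 := by
  classical
  haveI hIm : (Ideal.span {π}).IsMaximal := PrincipalIdealRing.isMaximal_of_irreducible hπ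
  letI kMod : Module (R ⧸ Ideal.span {π}) P := htor.module
  letI : Field (R ⧸ Ideal.span {π}) := Ideal.Quotient.field _
  haveI : IsScalarTower R (R ⧸ Ideal.span {π}) P :=
    Module.IsTorsionBySet.isScalarTower ((Module.isTorsionBySet_span_singleton_iff π).mpr htor)
  haveI : Module.Finite (R ⧸ Ideal.span {π}) P :=
    Module.Finite.of_restrictScalars_finite R _ _
  haveI : FiniteDimensional (R ⧸ Ideal.span {π}) P := inferInstance
  -- transfer of submodules
  let toK : Submodule R P → Submodule (R ⧸ Ideal.span {π}) P := fun p =>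
    { carrier := p
      add_mem' := fun h1 h2 => p.add_mem h1 h2
      zero_mem' := p.zero_mem
      smul_mem' := by
        intro c x hx
        obtain ⟨a, rfl⟩ := Ideal.Quotient.mk_surjective c
        have hax : (Ideal.Quotient.mk (Ideal.span {π}) a) • x = a • x :=
          Module.IsTorsionBy.mk_smul htor a x
        rw [hax]
        exact p.smul_mem a hx }
  have toK_mem : ∀ (p : Submodule R P) (x : P), x ∈ toK p ↔ x ∈ p := fun _ _ => Iff.rfl
  have toK_covBy : ∀ {a b : Submodule R P}, a ⋖ b → toK a ⋖ toK b := by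
    intro a b hab
    obtain ⟨x, hxb, hxa⟩ := SetLike.exists_of_lt hab.lt
    constructor
    · exact SetLike.lt_iff_le_and_exists.mpr ⟨fun y hy => hab.lt.le hy, x, hxb, hxa⟩
    · intro c h1 h2
      have e1 : a < Submodule.restrictScalars R c := by
        refine lt_of_le_of_ne (fun y hy => h1.le hy) ?_
        intro h
        exact h1.ne (SetLike.ext' (by rw [h]; rfl))
      have e2 : Submodule.restrictScalars R c < b := by
        refine lt_of_le_of_ne (fun y hy => h2.le hy) ?_
        intro h
        exact h2.ne (SetLike.ext' (by rw [← h]; rfl))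
      exact hab.2 e1 e2
  -- rank goes up by at most one along a covering
  have hstep : ∀ {a b : Submodule (R ⧸ Ideal.span {π}) P}, a ⋖ b →
      Module.finrank (R ⧸ Ideal.span {π}) b ≤ Module.finrank (R ⧸ Ideal.span {π}) a + 1 := by
    intro a b hab
    obtain ⟨x, hxb, hxa⟩ := SetLike.exists_of_lt hab.lt
    have hxne : x ≠ 0 := fun h => hxa (h ▸ a.zero_mem)
    have hsup : a ⊔ ((R ⧸ Ideal.span {π}) ∙ x) = b := by
      have h1 : a < a ⊔ ((R ⧸ Ideal.span {π}) ∙ x) :=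
        SetLike.lt_iff_le_and_exists.mpr ⟨le_sup_left, x,
          Submodule.mem_sup_right (Submodule.mem_span_singleton_self x), hxa⟩
      have h2 : a ⊔ ((R ⧸ Ideal.span {π}) ∙ x) ≤ b :=
        sup_le hab.lt.le ((Submodule.span_singleton_le_iff_mem x b).mpr hxb)
      rcases lt_or_eq_of_le h2 with h | h
      · exact absurd h (hab.2 h1)
      · exact h
    have heq := Submodule.finrank_sup_add_finrank_inf_eq a ((R ⧸ Ideal.span {π}) ∙ x)
    rw [hsup] at heq
    have hrk1 : Module.finrank (R ⧸ Ideal.span {π}) ((R ⧸ Ideal.span {π}) ∙ x) = 1 :=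
      finrank_span_singleton hxne
    omega
  -- the length bound on the rank
  obtain ⟨s, hhead, hlast, hslen⟩ := hlen
  have key : ∀ j : Fin (s.length + 1),
      Module.finrank (R ⧸ Ideal.span {π}) (toK (s j)) ≤ (j : ℕ) := by
    intro j
    induction j using Fin.induction with
    | zero =>
      have h0 : s 0 = ⊥ := hhead
      have : toK (s 0) = ⊥ := by
        rw [h0]
        exact SetLike.ext fun x => Iff.rfl
      rw [this]
      simp
    | succ i ih =>
      have hcov : s i.castSucc ⋖ s i.succ := s.step i
      have := hstep (toK_covBy hcov)
      have hcast : ((i.castSucc : Fin (s.length + 1)) : ℕ) = (i : ℕ) := rfl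
      rw [hcast] at ih
      have hsucc : ((i.succ : Fin (s.length + 1)) : ℕ) = (i : ℕ) + 1 := rfl
      rw [hsucc]
      omega
  have hfr : Module.finrank (R ⧸ Ideal.span {π}) P ≤ n := by
    have hlastt : toK (s (Fin.last s.length)) = ⊤ := by
      have : s (Fin.last s.length) = ⊤ := hlast
      rw [this]
      exact SetLike.ext fun x => Iff.rfl
    have := key (Fin.last s.length)
    rw [hlastt] at this
    rw [finrank_top] at this
    simpa [hslen] using this
  -- linear dependence
  have hnli : ¬ LinearIndependent (R ⧸ Ideal.span {π}) q := by
    intro hli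
    have := hli.fintype_card_le_finrank
    rw [Fintype.card_fin] at this
    omega
  obtain ⟨g, hg0, l₀, hgl₀⟩ := Fintype.not_linearIndependent_iff.mp hnli
  let c : Fin m → R := fun l => Function.surjInv Ideal.Quotient.mk_surjective (g l)
  have hcg : ∀ l, Ideal.Quotient.mk (Ideal.span {π}) (c l) = g l := fun l =>
    Function.surjInv_eq _ _
  refine ⟨c, ⟨l₀, ?_⟩, ?_⟩
  · by_contra hcu
    have hmem : c l₀ ∈ IsLocalRing.maximalIdeal R := hcu
    rw [hπ.maximalIdeal_eq] at hmem
    exact hgl₀ (by rw [← hcg l₀, Ideal.Quotient.eq_zero_iff_mem]; exact hmem)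
  · have hsm : ∀ l, c l • q l = g l • q l := fun l => by
      rw [← hcg l]
      exact (Module.IsTorsionBy.mk_smul htor (c l) (q l)).symm
    rw [Finset.sum_congr rfl fun l _ => hsm l]
    exact hg0

section Helpers

variable {R : Type*} [CommRing R] {A : Type*} [Ring A] [Algebra R A]

lemma listProd_mem_pow (N : Submodule R A) :
    ∀ {m : ℕ} (g : Fin m → A), (∀ l, g l ∈ N) → (List.ofFn g).prod ∈ N ^ m := by
  intro m
  induction m with
  | zero =>
    intro g _
    rw [List.ofFn_zero, List.prod_nil, pow_zero]
    exact Submodule.one_le.mp le_rfl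
  | succ m ih =>
    intro g hg
    rw [List.ofFn_succ, List.prod_cons, pow_succ']
    exact Submodule.mul_mem_mul (hg 0) (ih _ fun l => hg l.succ)

lemma smul_pow_submodule (c : R) (N : Submodule R A) :
    ∀ m : ℕ, (c • N) ^ m = c ^ m • N ^ m := by
  intro m
  induction m with
  | zero => simp
  | succ m ih =>
    rw [pow_succ', pow_succ', ih, ← Submodule.mul_smul_mul_eq_smul_mul_smul, ← pow_succ',
      ← pow_succ']

lemma pow_mono_submodule {N N' : Submodule R A} (h : N ≤ N') :
    ∀ m : ℕ, N ^ m ≤ N' ^ m := by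
  intro m
  induction m with
  | zero => exact le_rfl
  | succ m ih =>
    rw [pow_succ, pow_succ]
    exact mul_le_mul' ih h

lemma map_smul_pointwise {M : Type*} [AddCommGroup M] [Module R M]
    (f : M →ₗ[R] A) (c : R) (N : Submodule R M) :
    Submodule.map f (c • N) = c • Submodule.map f N := by
  apply le_antisymm
  · rintro _ ⟨y, hy, rfl⟩
    have hy' : y ∈ c • (N : Set M) := by
      rw [← Submodule.coe_pointwise_smul]; exact hy
    obtain ⟨v, hv, rfl⟩ := hy'
    rw [map_smul]
    exact Submodule.smul_mem_pointwise_smul _ _ _ ⟨v, hv, rfl⟩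
  · intro z hz
    have hz' : z ∈ c • (Submodule.map f N : Set A) := by
      rw [← Submodule.coe_pointwise_smul]; exact hz
    obtain ⟨y, hy, rfl⟩ := hz'
    obtain ⟨v, hv, rfl⟩ := hy
    exact ⟨c • v, Submodule.smul_mem_pointwise_smul _ _ _ hv, map_smul f c v⟩

lemma div_smul_mem {c : R} (hc : c ≠ 0) [IsDomain R] [NoZeroSMulDivisors R A]
    {z : A} {U : Submodule R A} {a K : ℕ} (hz : c ^ a • z ∈ c ^ (K + a) • U) :
    z ∈ c ^ K • U := by
  have hz' : c ^ a • z ∈ c ^ (K + a) • (U : Set A) := by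
    rw [← Submodule.coe_pointwise_smul]; exact hz
  obtain ⟨u, hu, heq⟩ := hz'
  have h2 : c ^ a • (c ^ K • u) = c ^ a • z := by
    rw [smul_smul, ← pow_add]
    rw [add_comm]
    exact heq
  have h3 : c ^ K • u = z := smul_right_injective A (pow_ne_zero a hc) h2
  rw [← h3]
  exact Submodule.smul_mem_pointwise_smul _ _ _ hu

end Helpers

section Elim

variable {R : Type*} [CommRing R] {M : Type*} [AddCommGroup M] [Module R M]

lemma elimination_lemma (π : R) {S T : Submodule R M}
    (hπS : ∀ x ∈ S, π • x ∈ T) (n : ℕ)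
    (hdep : ∀ (m' : ℕ), n < m' → ∀ x : Fin m' → M, (∀ l, x l ∈ S) →
      ∃ c : Fin m' → R, (∃ l, IsUnit (c l)) ∧ (∑ l, c l • x l) ∈ T) :
    ∀ (m : ℕ) (x : Fin m → M), (∀ l, x l ∈ S) →
      π ^ min m n • (ExteriorAlgebra.ιMulti R m x : ExteriorAlgebra R M)
        ∈ (Submodule.map (ExteriorAlgebra.ι R) T) ^ m := by
  intro m
  induction m with
  | zero =>
    intro x _
    simp only [Nat.zero_min, pow_zero, one_smul, ExteriorAlgebra.ιMulti_zero_apply]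
    exact Submodule.one_le.mp le_rfl
  | succ m ih =>
    intro x hx
    by_cases hmn : m + 1 ≤ n
    · -- push every slot by π
      rw [min_eq_left hmn]
      have hpush : (ExteriorAlgebra.ιMulti R (m + 1)) (fun l => π • x l)
          = (π : R) ^ (m + 1) • (ExteriorAlgebra.ιMulti R (m + 1) x
            : ExteriorAlgebra R M) := by
        have h := (ExteriorAlgebra.ιMulti R (m + 1)).toMultilinearMap.map_smul_univ
          (fun _ => π) x
        simpa [Finset.prod_const] using h
      rw [← hpush, ExteriorAlgebra.ιMulti_apply]
      exact listProd_mem_pow _ _ fun l => ⟨π • x l, hπS _ (hx l), rfl⟩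
    · -- eliminate one slot
      push_neg at hmn
      have hnm : n ≤ m := Nat.lt_succ_iff.mp hmn
      rw [min_eq_right (Nat.le_succ_of_le hnm)]
      obtain ⟨c, ⟨l₀, hu⟩, hsum⟩ := hdep (m + 1) hmn x hx
      set σ := Equiv.swap (0 : Fin (m + 1)) l₀ with hσ
      set x' : Fin (m + 1) → M := x ∘ σ with hx'def
      have hx' : ∀ l, x' l ∈ S := fun l => hx _
      set c' : Fin (m + 1) → R := c ∘ σ with hc'def
      have hc'0 : c' 0 = c l₀ := by
        simp [hc'def, hσ, Equiv.swap_apply_left]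
      have hu' : IsUnit (c' 0) := hc'0 ▸ hu
      have hsum' : (∑ l, c' l • x' l) ∈ T := by
        have : ∑ l, c' l • x' l = ∑ l, c l • x l :=
          Equiv.sum_comp σ (fun l => c l • x l)
        rwa [this]
      -- enough to prove it for x'
      suffices h' : π ^ n • (ExteriorAlgebra.ιMulti R (m + 1) x' : ExteriorAlgebra R M)
          ∈ (Submodule.map (ExteriorAlgebra.ι R) T) ^ (m + 1) by
        have hperm : (ExteriorAlgebra.ιMulti R (m + 1)) x'
            = Equiv.Perm.sign σ • (ExteriorAlgebra.ιMulti R (m + 1)) x :=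
          AlternatingMap.map_perm (ExteriorAlgebra.ιMulti R (m + 1)) x σ
        rcases Int.units_eq_one_or (Equiv.Perm.sign σ) with hsg | hsg
        · rw [hsg, one_smul] at hperm
          rwa [← hperm]
        · rw [hsg, Units.smul_def, Units.val_neg, Units.val_one, neg_one_zsmul] at hperm
          have : (ExteriorAlgebra.ιMulti R (m + 1)) x
              = -((ExteriorAlgebra.ιMulti R (m + 1)) x') := by
            rw [hperm, neg_neg]
          rw [this, smul_neg]
          exact Submodule.neg_mem _ h'
      -- the linear map in the 0-th slot
      set y : M := ∑ l, c' l • x' l with hydef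
      set L : M →ₗ[R] ExteriorAlgebra R M :=
        (ExteriorAlgebra.ιMulti R (m + 1)).toMultilinearMap.toLinearMap x' 0 with hLdef
      have hLy : L y = c' 0 • (ExteriorAlgebra.ιMulti R (m + 1)) x' := by
        rw [hydef, map_sum]
        have hterm : ∀ l : Fin (m + 1), l ≠ 0 → L (c' l • x' l) = 0 := by
          intro l hl
          rw [map_smul]
          have : L (x' l) = 0 := by
            rw [hLdef]
            simp only [MultilinearMap.toLinearMap_apply]
            exact AlternatingMap.map_eq_zero_of_eq _ _
              (by rw [Function.update_self, Function.update_of_ne hl]) (Ne.symm hl)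
          rw [this, smul_zero]
        rw [Finset.sum_eq_single 0 (fun l _ hl => hterm l hl) (by simp)]
        rw [map_smul, hLdef]
        simp only [MultilinearMap.toLinearMap_apply]
        rw [Function.update_eq_self]
        rfl
      -- compute ιMulti at the updated vector
      have hupdate : (ExteriorAlgebra.ιMulti R (m + 1)) (Function.update x' 0 y)
          = ExteriorAlgebra.ι R y
            * (ExteriorAlgebra.ιMulti R m) (fun i : Fin m => x' i.succ) := by
        rw [ExteriorAlgebra.ιMulti_succ_apply]
        have h0 : Function.update x' 0 y 0 = y := Function.update_self _ _ _
        have ht : Matrix.vecTail (Function.update x' 0 y) = fun i : Fin m => x' i.succ := by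
          funext i
          simp only [Matrix.vecTail, Function.comp_apply]
          exact Function.update_of_ne (Fin.succ_ne_zero i) _ _
        rw [h0, ht]
      have hLy' : L y = (ExteriorAlgebra.ιMulti R (m + 1)) (Function.update x' 0 y) := by
        rw [hLdef]; simp only [MultilinearMap.toLinearMap_apply]; rfl
      -- use the induction hypothesis on the tail
      have htail : π ^ n • ((ExteriorAlgebra.ιMulti R m) (fun i : Fin m => x' i.succ)
            : ExteriorAlgebra R M)
          ∈ (Submodule.map (ExteriorAlgebra.ι R) T) ^ m := by
        have := ih (fun i : Fin m => x' i.succ) (fun i => hx' i.succ)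
        rwa [min_eq_right hnm] at this
      have hmem : π ^ n • (c' 0 • (ExteriorAlgebra.ιMulti R (m + 1)) x')
          ∈ (Submodule.map (ExteriorAlgebra.ι R) T) ^ (m + 1) := by
        rw [← hLy, hLy', hupdate, ← mul_smul_comm]
        rw [pow_succ']
        exact Submodule.mul_mem_mul ⟨y, hsum', rfl⟩ htail
      obtain ⟨U, hU⟩ := hu'
      have := Submodule.smul_mem _ ((U⁻¹ : Rˣ) : R) hmem
      rwa [smul_comm (π ^ n), ← hU, smul_smul, Units.inv_mul, one_smul] at this

end Elim

/-- Let `R` be a DVR with uniformizer `π`, `M` a free `R`-module of finite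
rank, `e ≥ 1`, and `Fil⁰ ⊆ ⋯ ⊆ Fil^e ⊆ M` a chain of submodules with `Fil⁰ ⊆ π^e·M`,
`π·Fil^i ⊆ Fil^{i-1}`, and `Fil^i/Fil^{i-1}` of length `dᵢ` for `1 ≤ i ≤ e`.  Then for
every `d ≥ 1`, the image of the canonical map `⋀^d Fil^e → ⋀^d M` (the submodule
`(ι Fil^e)^d` of the exterior algebra) is contained in `π^{k_d} · ⋀^d M`, where
`k_d = ∑_{j=1}^{e} max(d - dⱼ, 0)` (the `max` with `0` being truncated subtraction). -/
theorem exteriorPower_filtration_divisibility_top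
    {R : Type*} [CommRing R] [IsDomain R] [IsDiscreteValuationRing R]
    (π : R) (hπ : Irreducible π)
    {M : Type*} [AddCommGroup M] [Module R M] [Module.Free R M] [Module.Finite R M]
    (e : ℕ) (he : 1 ≤ e) (d : ℕ → ℕ) (Fil : ℕ → Submodule R M)
    (hFil0 : Fil 0 ≤ π ^ e • (⊤ : Submodule R M))
    (hmono : ∀ i, 1 ≤ i → i ≤ e → Fil (i - 1) ≤ Fil i)
    (hsm : ∀ i, 1 ≤ i → i ≤ e → π • Fil i ≤ Fil (i - 1))
    (hlen : ∀ i, 1 ≤ i → i ≤ e →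
      ModuleLengthEq R (↥(Fil i) ⧸ (Fil (i - 1)).comap (Fil i).subtype) (d i))
    (dd : ℕ) (hdd : 1 ≤ dd) :
    (Submodule.map (ExteriorAlgebra.ι R) (Fil e)) ^ dd ≤
      π ^ (∑ j ∈ Finset.Icc 1 e, (dd - d j)) •
        (⋀[R]^dd M : Submodule R (ExteriorAlgebra R M)) := by

  classical
  haveI : NoZeroSMulDivisors R (ExteriorAlgebra R M) := ExtTF.exteriorAlgebra_noZeroSMulDivisors R M
  haveI : IsNoetherian R M := isNoetherian_of_isNoetherianRing_of_finite R M
  have main : ∀ i, i ≤ e → (Submodule.map (ExteriorAlgebra.ι R) (Fil i)) ^ dd ≤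
      π ^ ((e - i) * dd + ∑ j ∈ Finset.Icc 1 i, (dd - d j)) •
        (⋀[R]^dd M : Submodule R (ExteriorAlgebra R M)) := by
    intro i
    induction i with
    | zero =>
      intro _
      have h1 : Submodule.map (ExteriorAlgebra.ι R) (Fil 0)
          ≤ π ^ e • LinearMap.range (ExteriorAlgebra.ι R (M := M)) := by
        calc Submodule.map (ExteriorAlgebra.ι R) (Fil 0)
            ≤ Submodule.map (ExteriorAlgebra.ι R) (π ^ e • ⊤) := Submodule.map_mono hFil0
          _ = π ^ e • Submodule.map (ExteriorAlgebra.ι R) ⊤ := map_smul_pointwise _ _ _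
          _ = π ^ e • LinearMap.range (ExteriorAlgebra.ι R) := by rw [Submodule.map_top]
      have h2 := pow_mono_submodule h1 dd
      rw [smul_pow_submodule, ← pow_mul] at h2
      have hexp : e * dd = (e - 0) * dd + ∑ j ∈ Finset.Icc 1 0, (dd - d j) := by
        simp
      rw [hexp] at h2
      exact h2
    | succ i ih =>
      intro hie
      have hi_le : i ≤ e := Nat.le_of_succ_le hie
      have hIH := ih hi_le
      have h1e : 1 ≤ i + 1 := Nat.succ_le_succ (Nat.zero_le i)
      set n := d (i + 1) with hn
      have hπS : ∀ x ∈ Fil (i + 1), π • x ∈ Fil i := by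
        intro v hv
        exact hsm (i + 1) h1e hie (Submodule.smul_mem_pointwise_smul v π _ hv)
      haveI : Module.Finite R ↥(Fil (i + 1)) :=
        Module.Finite.iff_fg.mpr (IsNoetherian.noetherian _)
      have hlen' := hlen (i + 1) h1e hie
      have htor : Module.IsTorsionBy R
          (↥(Fil (i + 1)) ⧸ (Fil ((i + 1) - 1)).comap (Fil (i + 1)).subtype) π := by
        intro p
        obtain ⟨v, rfl⟩ := Submodule.Quotient.mk_surjective _ p
        rw [← Submodule.Quotient.mk_smul, Submodule.Quotient.mk_eq_zero, Submodule.mem_comap]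
        exact hπS ↑v v.2
      have hdep : ∀ (m' : ℕ), n < m' → ∀ xx : Fin m' → M, (∀ l, xx l ∈ Fil (i + 1)) →
          ∃ c : Fin m' → R, (∃ l, IsUnit (c l)) ∧ (∑ l, c l • xx l) ∈ Fil i := by
        intro m' hm' xx hxx
        obtain ⟨c, hcu, hc0⟩ := exists_unit_relation π hπ htor hlen' hm'
          (fun l => Submodule.Quotient.mk ⟨xx l, hxx l⟩)
        refine ⟨c, hcu, ?_⟩
        have hker : (∑ l, c l • (⟨xx l, hxx l⟩ : ↥(Fil (i + 1))))
            ∈ (Fil ((i + 1) - 1)).comap (Fil (i + 1)).subtype := by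
          rw [← Submodule.Quotient.mk_eq_zero]
          have hmk : Submodule.Quotient.mk (p := (Fil ((i + 1) - 1)).comap (Fil (i + 1)).subtype)
              (∑ l, c l • (⟨xx l, hxx l⟩ : ↥(Fil (i + 1))))
              = ∑ l, c l • (Submodule.Quotient.mk (⟨xx l, hxx l⟩ : ↥(Fil (i + 1)))
                  : ↥(Fil (i + 1)) ⧸ (Fil ((i + 1) - 1)).comap (Fil (i + 1)).subtype) := by
            rw [← Submodule.mkQ_apply, map_sum]
            refine Finset.sum_congr rfl fun l _ => ?_
            rw [map_smul, Submodule.mkQ_apply]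
          rw [hmk]
          exact hc0
        have := Submodule.mem_comap.mp hker
        simpa using this
      have helim := elimination_lemma π hπS n hdep dd
      have hsub : (Submodule.map (ExteriorAlgebra.ι R) (Fil (i + 1))) ^ dd ≤
          ((Submodule.map (ExteriorAlgebra.ι R) (Fil i)) ^ dd).comap
            (LinearMap.lsmul R (ExteriorAlgebra R M) (π ^ min dd n)) := by
        rw [Submodule.pow_eq_span_pow_set, Submodule.span_le]
        intro z hz
        rw [Set.mem_pow] at hz
        obtain ⟨f, hf⟩ := hz
        have hfmem : ∀ l, (f l : ExteriorAlgebra R M)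
            ∈ Submodule.map (ExteriorAlgebra.ι R) (Fil (i + 1)) := fun l => (f l).2
        choose xv hxv hfeq using fun l => Submodule.mem_map.mp (hfmem l)
        have hprod : (List.ofFn fun l => (f l : ExteriorAlgebra R M)).prod
            = (ExteriorAlgebra.ιMulti R dd) xv := by
          have hfun : (fun l => (f l : ExteriorAlgebra R M))
              = fun l => ExteriorAlgebra.ι R (xv l) := funext fun l => (hfeq l).symm
          rw [ExteriorAlgebra.ιMulti_apply, hfun]
        have hz' : z = (ExteriorAlgebra.ιMulti R dd) xv := by rw [← hf, hprod]
        rw [SetLike.mem_coe, Submodule.mem_comap, LinearMap.lsmul_apply, hz']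
        exact helim xv hxv
      intro z hz
      have h1 : π ^ min dd n • z ∈ (Submodule.map (ExteriorAlgebra.ι R) (Fil i)) ^ dd :=
        hsub hz
      have h2 := hIH h1
      have harith : (e - i) * dd + ∑ j ∈ Finset.Icc 1 i, (dd - d j)
          = ((e - (i + 1)) * dd + ∑ j ∈ Finset.Icc 1 (i + 1), (dd - d j)) + min dd n := by
        have hsum : ∑ j ∈ Finset.Icc 1 (i + 1), (dd - d j)
            = (∑ j ∈ Finset.Icc 1 i, (dd - d j)) + (dd - n) := by
          rw [← Finset.sum_Icc_succ_top h1e]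
        have hei : e - i = (e - (i + 1)) + 1 := by omega
        have hmin : min dd n + (dd - n) = dd := by
          rcases le_total dd n with h | h
          · rw [min_eq_left h]; omega
          · rw [min_eq_right h]; omega
        rw [hsum, hei, add_mul, one_mul]
        omega
      rw [harith] at h2
      exact div_smul_mem hπ.ne_zero h2
  have := main e le_rfl
  rwa [Nat.sub_self, zero_mul, zero_add] at this
end

section
/- Let R be a discrete valuation ring with uniformizer π, let M be a free R-module with basis (e₁, …, e_h), let a₁ ≤ a₂ ≤ ⋯ ≤ a_h be natural numbers, and let N ⊆ M be the submodule generated by (π^{a₁}e₁, …, π^{a_h}e_h). Then for every 1 ≤ s ≤ h: (i) the image of the canonical map ⋀^s N → ⋀^s M is contained in π^{a₁+⋯+a_s} · ⋀^s M; and (ii) the element π^{a₁+⋯+a_s} · (e₁ ∧ ⋯ ∧ e_s) lies in this image, so the exponent a₁+⋯+a_s is optimal. -/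
open Pointwise

section Aux

variable {R : Type*} {A : Type*} [CommSemiring R] [Semiring A] [Algebra R A]

lemma aux_list_prod_mem_pow (P : Submodule R A) :
    ∀ l : List A, (∀ x ∈ l, x ∈ P) → l.prod ∈ P ^ l.length
  | [], _ => by
      rw [List.prod_nil, List.length_nil, pow_zero]
      exact Submodule.one_le.mp le_rfl
  | x :: l, hl => by
      rw [List.prod_cons, List.length_cons, pow_succ']
      exact Submodule.mul_mem_mul (hl x List.mem_cons_self)
        (aux_list_prod_mem_pow P l fun y hy => hl y (List.mem_cons_of_mem _ hy))

lemma aux_smul_list_prod : ∀ (n : ℕ) (c : Fin n → R) (x : Fin n → A),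
    (List.ofFn fun i => c i • x i).prod = (∏ i, c i) • (List.ofFn x).prod
  | 0, c, x => by simp
  | n + 1, c, x => by
      rw [List.ofFn_succ, List.ofFn_succ, List.prod_cons, List.prod_cons,
        aux_smul_list_prod n (fun i => c i.succ) (fun i => x i.succ),
        Fin.prod_univ_succ, smul_mul_assoc, Algebra.mul_smul_comm, smul_smul]

lemma aux_strictMono_le {s : ℕ} {g : Fin s → ℕ} (hg : StrictMono g) :
    ∀ i : Fin s, (i : ℕ) ≤ g i := by
  have key : ∀ k : ℕ, ∀ i : Fin s, (i : ℕ) = k → k ≤ g i := by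
    intro k
    induction k with
    | zero => intro i _; exact Nat.zero_le _
    | succ k ih =>
        intro i hi
        have hk : k < s := by omega
        have hlt : (⟨k, hk⟩ : Fin s) < i := by
          simp [Fin.lt_def, hi]
        have := hg hlt
        have := ih ⟨k, hk⟩ rfl
        omega
  exact fun i => key (i : ℕ) i rfl

lemma aux_sum_mono_le {a : ℕ → ℕ} (ha : Monotone a) {s h : ℕ} {f : Fin s → Fin h}
    (hf : Function.Injective f) :
    ∑ i : Fin s, a i ≤ ∑ i : Fin s, a (f i : ℕ) := by
  classical
  set F : Fin s → ℕ := fun i => (f i : ℕ) with hF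
  have hFinj : Function.Injective F := fun i j hij => hf (Fin.val_injective hij)
  set T : Finset ℕ := Finset.image F Finset.univ with hT
  have hcard : T.card = s := by
    rw [hT, Finset.card_image_of_injective _ hFinj, Finset.card_univ, Fintype.card_fin]
  have hsum1 : ∑ i : Fin s, a (F i) = ∑ x ∈ T, a x := by
    rw [hT, Finset.sum_image fun i _ j _ hij => hFinj hij]
  have hsum2 : ∑ x ∈ T, a x = ∑ i : Fin s, a (T.orderEmbOfFin hcard i) := by
    have himg : Finset.image (T.orderEmbOfFin hcard) Finset.univ = T := by
      have hrange := Finset.range_orderEmbOfFin T hcard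
      ext x
      simp only [Finset.mem_image, Finset.mem_univ, true_and]
      constructor
      · rintro ⟨i, rfl⟩; exact Finset.orderEmbOfFin_mem T hcard i
      · intro hx
        have hx' : x ∈ Set.range (T.orderEmbOfFin hcard) := by
          rw [hrange]; exact_mod_cast hx
        obtain ⟨i, hi⟩ := hx'; exact ⟨i, hi⟩
    have hinj2 : ∀ i ∈ Finset.univ, ∀ j ∈ (Finset.univ : Finset (Fin s)),
        T.orderEmbOfFin hcard i = T.orderEmbOfFin hcard j → i = j :=
      fun i _ j _ hij => (T.orderEmbOfFin hcard).injective hij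
    conv_lhs => rw [← himg]
    rw [Finset.sum_image hinj2]
  calc ∑ i : Fin s, a i ≤ ∑ i : Fin s, a (T.orderEmbOfFin hcard i) :=
        Finset.sum_le_sum fun i _ =>
          ha (aux_strictMono_le (T.orderEmbOfFin hcard).strictMono i)
    _ = ∑ x ∈ T, a x := hsum2.symm
    _ = ∑ i : Fin s, a (F i) := hsum1.symm

end Aux

lemma aux_prod_eq_zero_of_not_injective {R : Type*} [CommRing R]
    {M : Type*} [AddCommGroup M] [Module R M]
    {s : ℕ} {v : Fin s → M} (hv : ¬ Function.Injective v) :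
    (List.ofFn fun i => ExteriorAlgebra.ι R (v i)).prod = 0 := by
  rw [← ExteriorAlgebra.ιMulti_apply]
  obtain ⟨i, j, hij, hne⟩ := Function.not_injective_iff.mp hv
  exact AlternatingMap.map_eq_zero_of_eq _ v hij hne

/-- Let `R` be a DVR with uniformizer `π`, `M` free with basis
`(e₁, …, e_h)`, `a₁ ≤ ⋯ ≤ a_h` naturals, and `N ⊆ M` the submodule generated by the
`π^{aᵢ}·eᵢ`.  Then for `1 ≤ s ≤ h`: (i) the image of the canonical map `⋀^s N → ⋀^s M`
(the submodule `(ι N)^s` of the exterior algebra) is contained in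
`π^{a₁+⋯+a_s} · ⋀^s M`; and (ii) `π^{a₁+⋯+a_s} · (e₁ ∧ ⋯ ∧ e_s)` lies in this image,
so the exponent is optimal. -/
theorem exteriorPower_elementary_divisors
    {R : Type*} [CommRing R] [IsDomain R] [IsDiscreteValuationRing R]
    (π : R) (hπ : Irreducible π)
    {M : Type*} [AddCommGroup M] [Module R M]
    (h : ℕ) (b : Module.Basis (Fin h) R M)
    (a : ℕ → ℕ) (ha : Monotone a)
    (N : Submodule R M)
    (hN : N = Submodule.span R (Set.range fun i : Fin h => π ^ a (i : ℕ) • b i))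
    (s : ℕ) (hs1 : 1 ≤ s) (hsh : s ≤ h) :
    (Submodule.map (ExteriorAlgebra.ι R) N) ^ s ≤
      π ^ (∑ i ∈ Finset.range s, a i) •
        (⋀[R]^s M : Submodule R (ExteriorAlgebra R M)) ∧
    π ^ (∑ i ∈ Finset.range s, a i) •
        (List.ofFn fun i : Fin s => ExteriorAlgebra.ι R (b (Fin.castLE hsh i))).prod ∈
      (Submodule.map (ExteriorAlgebra.ι R) N) ^ s := by
  have hpsum : π ^ (∑ i ∈ Finset.range s, a i) = ∏ i : Fin s, π ^ a (i : ℕ) := by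
    rw [Finset.prod_pow_eq_pow_sum, ← Fin.sum_univ_eq_sum_range]
  constructor
  · -- part (i)
    rw [hN, Submodule.map_span, ← Set.range_comp, Submodule.span_pow, Submodule.span_le]
    intro x hx
    obtain ⟨f, rfl⟩ := Set.mem_pow.mp hx
    choose g hg using fun i => (f i).2
    have hfi : ∀ i, ((f i : ExteriorAlgebra R M))
        = π ^ a ((g i : Fin h) : ℕ) • ExteriorAlgebra.ι R (b (g i)) := by
      intro i
      rw [← hg i]
      simp [Function.comp, map_smul]
    have hx2 : (List.ofFn fun i => ((f i : ExteriorAlgebra R M))).prod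
        = (∏ i : Fin s, π ^ a (g i : ℕ)) •
          (List.ofFn fun i => ExteriorAlgebra.ι R (b (g i))).prod := by
      rw [← aux_smul_list_prod]
      simp only [hfi]
    rw [hx2]
    by_cases hinj : Function.Injective g
    · have hginj : Function.Injective fun i => b (g i) :=
        fun i j hij => hinj (b.injective hij)
      have hsum : ∑ i ∈ Finset.range s, a i ≤ ∑ i : Fin s, a (g i : ℕ) := by
        rw [← Fin.sum_univ_eq_sum_range]
        exact aux_sum_mono_le ha hinj
      have hprodmem : (List.ofFn fun i => ExteriorAlgebra.ι R (b (g i))).prod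
          ∈ (⋀[R]^s M : Submodule R (ExteriorAlgebra R M)) := by
        have := aux_list_prod_mem_pow
          (LinearMap.range (ExteriorAlgebra.ι R : M →ₗ[R] ExteriorAlgebra R M))
          (List.ofFn fun i => ExteriorAlgebra.ι R (b (g i))) (by
            intro x hx
            obtain ⟨i, rfl⟩ := List.mem_ofFn.mp hx
            exact LinearMap.mem_range_self _ _)
        rwa [List.length_ofFn] at this
      rw [Finset.prod_pow_eq_pow_sum,
        show ∑ i : Fin s, a (g i : ℕ) = (∑ i ∈ Finset.range s, a i) +
          ((∑ i : Fin s, a (g i : ℕ)) - ∑ i ∈ Finset.range s, a i) by omega,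
        pow_add, mul_smul]
      exact Submodule.smul_mem_pointwise_smul _ _ _
        (Submodule.smul_mem _ _ hprodmem)
    · have : ¬ Function.Injective fun i => b (g i) := by
        intro hc
        exact hinj fun i j hij => by
          have : b (g i) = b (g j) := by rw [hij]
          exact hc this
      rw [aux_prod_eq_zero_of_not_injective this, smul_zero]
      exact Submodule.zero_mem _
  · -- part (ii)
    rw [hpsum, ← aux_smul_list_prod]
    have hmem := aux_list_prod_mem_pow (Submodule.map (ExteriorAlgebra.ι R) N)
      (List.ofFn fun i : Fin s =>
        π ^ a (i : ℕ) • ExteriorAlgebra.ι R (b (Fin.castLE hsh i))) ?_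
    · rwa [List.length_ofFn] at hmem
    intro x hx
    obtain ⟨i, rfl⟩ := List.mem_ofFn.mp hx
    rw [← map_smul]
    refine Submodule.mem_map_of_mem ?_
    rw [hN]
    apply Submodule.subset_span
    exact ⟨Fin.castLE hsh i, by simp [Fin.coe_castLE]⟩
end
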